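/- arXiv:2105.03350 — 8 statements merged into one kernel-verified Lean document; each statement's English description precedes it below -/
import Mathlib

section
/- Let F be the unique formal power series over ℚ with (1 - X)·F = (1 - X) + X·F², and write a(n) for the coefficient of Xⁿ in F. Then a(0) = 1, a(1) = 1, and for all n ≥ 2, a(n) = a(n-1) + Σ_{k=0}^{n-1} a(k)·a(n-1-k). -/
open PowerSeries

/-- Recurrence for the coefficients of the generating function of multi-edge trees:
`a 0 = 1`, `a 1 = 1`, and `a n = a (n-1) + ∑_{k=0}^{n-1} a k * a (n-1-k)` for `n ≥ 2`. -/
theorem multi_edge_tree_coeff_recurrence (F : PowerSeries ℚ)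
    (hF : (1 - X) * F = (1 - X) + X * F ^ 2) :
    coeff 0 F = 1 ∧ coeff 1 F = 1 ∧
      ∀ n : ℕ, 2 ≤ n →
        coeff n F =
          coeff (n - 1) F +
            ∑ k ∈ Finset.range n, coeff k F * coeff (n - 1 - k) F := by
  have h0 : coeff 0 F = 1 := by
    have := congrArg (coeff 0) hF
    simpa using this
  have key : ∀ n : ℕ, coeff (n+1) F - coeff n F =
      coeff (n+1) (1 - (X : PowerSeries ℚ)) +
        ∑ k ∈ Finset.range (n+1), coeff k F * coeff (n - k) F := by
    intro n
    have := congrArg (coeff (n+1)) hF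
    rw [sub_mul, one_mul, map_sub, coeff_succ_X_mul, map_add,
      coeff_succ_X_mul, pow_two, coeff_mul,
      Finset.Nat.sum_antidiagonal_eq_sum_range_succ_mk] at this
    exact this
  have h1 : coeff 1 F = 1 := by
    have := key 0
    simp [h0, coeff_one] at this
    linarith
  refine ⟨h0, h1, ?_⟩
  intro n hn
  obtain ⟨m, rfl⟩ : ∃ m, n = m + 2 := ⟨n - 2, by omega⟩
  have := key (m + 1)
  have hc : coeff (m + 1 + 1) (1 - (X : PowerSeries ℚ)) = 0 := by
    simp [coeff_X, coeff_one]
  rw [hc, zero_add] at this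
  have e : m + 2 - 1 = m + 1 := rfl
  rw [e]
  have : coeff (m + 2) F = coeff (m + 1) F +
      ∑ k ∈ Finset.range (m + 2), coeff k F * coeff (m + 1 - k) F := by
    have h2 : m + 1 + 1 = m + 2 := rfl
    rw [h2] at this
    linarith [this]
  exact this
end

section
/- There exists a unique formal power series M over ℚ satisfying the functional equation M = 1 + 3·X·M + X²·M². -/
open PowerSeries

private def motzkinA : ℕ → ℚ
  | 0 => 1
  | n + 1 => 3 * motzkinA n +
      ∑ i ∈ (Finset.range n).attach, motzkinA i * motzkinA (n - 1 - i)
  decreasing_by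
  · exact Nat.lt_succ_self n
  · exact Nat.lt_succ_of_lt (Finset.mem_range.mp i.2)
  · omega

private lemma motzkinA_sat :
    (PowerSeries.mk motzkinA : PowerSeries ℚ) =
      1 + 3 * X * PowerSeries.mk motzkinA + X ^ 2 * (PowerSeries.mk motzkinA) ^ 2 := by
  ext n
  rw [map_add, map_add]
  match n with
  | 0 =>
    simp [motzkinA, pow_two, mul_assoc, coeff_zero_eq_constantCoeff]
  | 1 =>
    have h1 : (coeff (R := ℚ) 1) (3 * X * PowerSeries.mk motzkinA) = 3 * motzkinA 0 := by
      rw [mul_assoc]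
      rw [show (3 : PowerSeries ℚ) * (X * PowerSeries.mk motzkinA)
        = (3 : ℚ) • (X * PowerSeries.mk motzkinA) by
          rw [smul_eq_C_mul, ← map_ofNat (C (R := ℚ)) 3]]
      rw [map_smul, coeff_succ_X_mul]
      simp
    have h2 : (coeff (R := ℚ) 1) (X ^ 2 * (PowerSeries.mk motzkinA) ^ 2) = 0 := by
      rw [coeff_X_pow_mul']
      simp
    rw [h1, h2]
    simp [motzkinA]
  | n + 2 =>
    have h1 : (coeff (R := ℚ) (n + 2)) (3 * X * PowerSeries.mk motzkinA)
        = 3 * motzkinA (n + 1) := by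
      rw [mul_assoc]
      rw [show (3 : PowerSeries ℚ) * (X * PowerSeries.mk motzkinA)
        = (3 : ℚ) • (X * PowerSeries.mk motzkinA) by
          rw [smul_eq_C_mul, ← map_ofNat (C (R := ℚ)) 3]]
      rw [map_smul, coeff_succ_X_mul]
      simp
    have h2 : (coeff (R := ℚ) (n + 2)) (X ^ 2 * (PowerSeries.mk motzkinA) ^ 2)
        = ∑ i ∈ Finset.range (n + 1), motzkinA i * motzkinA (n - i) := by
      rw [show n + 2 = n + 2 from rfl, coeff_X_pow_mul, pow_two, coeff_mul,
        Finset.Nat.sum_antidiagonal_eq_sum_range_succ_mk]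
      simp
    rw [h1, h2]
    have h3 : (coeff (R := ℚ) (n + 2)) (1 : PowerSeries ℚ) = 0 := by simp
    rw [h3, coeff_mk, zero_add]
    show motzkinA (n + 2) = _
    rw [motzkinA,
      Finset.sum_attach (Finset.range (n + 1)) (fun i => motzkinA i * motzkinA (n + 1 - 1 - i))]
    congr 1

/-- There exists a unique formal power series `M` over `ℚ` satisfying
`M = 1 + 3 * X * M + X ^ 2 * M ^ 2`. -/
theorem motzkin3_gf_exists_unique :
    ∃! M : PowerSeries ℚ, M = 1 + 3 * X * M + X ^ 2 * M ^ 2 := by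
  refine ⟨PowerSeries.mk motzkinA, motzkinA_sat, ?_⟩
  intro N hN
  set M := (PowerSeries.mk motzkinA : PowerSeries ℚ) with hM
  have hMeq := motzkinA_sat
  rw [← hM] at hMeq
  have key : (N - M) * (1 - (3 * X + X ^ 2 * (N + M))) = 0 := by
    linear_combination hN - hMeq
  have hne : (1 - (3 * X + X ^ 2 * (N + M)) : PowerSeries ℚ) ≠ 0 := by
    intro h
    have := congrArg (constantCoeff (R := ℚ)) h
    simp at this
  have := mul_eq_zero.mp key
  rcases this with h | h
  · exact sub_eq_zero.mp h
  · exact absurd h hne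
end

section
/- Let F be the unique formal power series over ℚ with (1 - X)·F = (1 - X) + X·F², and let M be the unique formal power series over ℚ with M = 1 + 3·X·M + X²·M². Then F = 1 + X·M in ℚ⟦X⟧. -/
open PowerSeries

/-- The generating function `F` of multi-edge trees and the generating function `M`
of 3-coloured Motzkin paths satisfy `F = 1 + X * M`. -/
theorem multi_edge_tree_eq_one_add_X_mul_motzkin (F M : PowerSeries ℚ)
    (hF : (1 - X) * F = (1 - X) + X * F ^ 2)
    (hM : M = 1 + 3 * X * M + X ^ 2 * M ^ 2) :
    F = 1 + X * M := by
  have hG : (1 - X) * (1 + X * M) = (1 - X) + X * (1 + X * M) ^ 2 := by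
    linear_combination X * hM
  have key : ((1 - X) - X * (F + (1 + X * M))) * (F - (1 + X * M)) = 0 := by
    linear_combination hF - hG
  have hD : ((1 - X) - X * (F + (1 + X * M))) ≠ 0 := by
    intro h
    have h0 := congrArg (constantCoeff (R := ℚ)) h
    simp at h0
  rcases mul_eq_zero.mp key with h | h
  · exact absurd h hD
  · exact sub_eq_zero.mp h
end

section
/- Let M be the unique formal power series over ℚ with M = 1 + 3·X·M + X²·M². For every natural number n, the number of 3-coloured Motzkin paths of length n equals the coefficient of Xⁿ in M. -/
open PowerSeries

/-- A step of a 3-coloured Motzkin path: an up-step, a down-step, or a horizontal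
step in one of three colours. -/
inductive Step3 : Type
  | up : Step3
  | down : Step3
  | level : Fin 3 → Step3

/-- The value (height change) of a step. -/
def Step3.val : Step3 → ℤ
  | .up => 1
  | .down => -1
  | .level _ => 0

/-- A list of steps is a 3-coloured Motzkin path if every prefix sum of the values
is nonnegative and the total sum is `0`. -/
def IsMotzkin3 (l : List Step3) : Prop :=
  (∀ t : List Step3, t <+: l → 0 ≤ (t.map Step3.val).sum) ∧ (l.map Step3.val).sum = 0

namespace Motzkin3Aux

/-- weight sum of a list of steps -/
def wsum (l : List Step3) : ℤ := (l.map Step3.val).sum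

@[simp] lemma wsum_nil : wsum [] = 0 := rfl

@[simp] lemma wsum_cons (a : Step3) (l : List Step3) : wsum (a :: l) = a.val + wsum l := by
  simp [wsum]

@[simp] lemma wsum_append (l₁ l₂ : List Step3) : wsum (l₁ ++ l₂) = wsum l₁ + wsum l₂ := by
  simp [wsum]

lemma isMotzkin3_iff (l : List Step3) :
    IsMotzkin3 l ↔ (∀ t : List Step3, t <+: l → 0 ≤ wsum t) ∧ wsum l = 0 := Iff.rfl

lemma val_mem_cases (a : Step3) : a.val = 1 ∨ a.val = -1 ∨ a.val = 0 := by
  cases a <;> simp [Step3.val]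

/-- an injection used to show `Step3` is finite -/
def toSum : Step3 → (Fin 3) ⊕ Bool
  | .up => .inr true
  | .down => .inr false
  | .level c => .inl c

lemma toSum_injective : Function.Injective toSum := by
  intro a b h
  cases a <;> cases b <;> simp_all [toSum]

instance : Finite Step3 := Finite.of_injective toSum toSum_injective

/-- the subtype of 3-coloured Motzkin paths of length `n` -/
abbrev S (n : ℕ) := {l : List Step3 // l.length = n ∧ IsMotzkin3 l}

instance (n : ℕ) : Finite (S n) := by
  apply Finite.of_injective (fun x : S n => fun i : Fin n => x.1.get (Fin.cast x.2.1.symm i))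
  intro x y h
  ext1
  apply List.ext_get (x.2.1.trans y.2.1.symm)
  intro i h1 h2
  have := congrFun h ⟨i, x.2.1 ▸ h1⟩
  simpa [Fin.cast] using this

lemma prefix_cases {t p r : List Step3} (h : t <+: p ++ r) :
    t <+: p ∨ ∃ s, t = p ++ s ∧ s <+: r := by
  rcases le_or_gt t.length p.length with hle | hlt
  · left
    have ht := List.prefix_iff_eq_take.mp h
    rw [List.take_append_of_le_length hle] at ht
    rw [ht]
    exact List.take_prefix _ _
  · right
    have ht := List.prefix_iff_eq_take.mp h
    refine ⟨r.take (t.length - p.length), ?_, List.take_prefix _ _⟩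
    calc t = (p ++ r).take t.length := ht
      _ = (p ++ r).take (p.length + (t.length - p.length)) := by
            congr 1
            omega
      _ = p ++ r.take (t.length - p.length) := by rw [List.take_length_add_append]

lemma prefix_cons_cases {t : List Step3} {a : Step3} {l : List Step3} (h : t <+: a :: l) :
    t = [] ∨ ∃ t', t = a :: t' ∧ t' <+: l := by
  rcases t with _ | ⟨b, t'⟩
  · exact Or.inl rfl
  · rw [List.cons_prefix_cons] at h
    exact Or.inr ⟨t', by rw [h.1], h.2⟩

lemma isMotzkin3_nil : IsMotzkin3 [] := by
  constructor
  · intro t ht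
    rw [List.prefix_nil.mp ht]
    simp [wsum]
  · simp [wsum]

lemma isMotzkin3_level_cons {c : Fin 3} {l : List Step3} :
    IsMotzkin3 (Step3.level c :: l) ↔ IsMotzkin3 l := by
  constructor
  · rintro ⟨h1, h2⟩
    refine ⟨fun t ht => ?_, ?_⟩
    · have := h1 (Step3.level c :: t) (by simpa [List.cons_prefix_cons] using ht)
      simpa [Step3.val] using this
    · simpa [Step3.val] using h2
  · rintro ⟨h1, h2⟩
    refine ⟨fun t ht => ?_, ?_⟩
    · rcases prefix_cons_cases ht with rfl | ⟨t', rfl, ht'⟩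
      · simp [wsum]
      · have := h1 t' ht'
        simpa [Step3.val] using this
    · simpa [Step3.val] using h2

lemma isMotzkin3_glue {p q : List Step3} (hp : IsMotzkin3 p) (hq : IsMotzkin3 q) :
    IsMotzkin3 (Step3.up :: (p ++ Step3.down :: q)) := by
  refine ⟨fun t ht => ?_, ?_⟩
  · rcases prefix_cons_cases ht with rfl | ⟨t', rfl, ht'⟩
    · simp [wsum]
    · rcases prefix_cases ht' with htp | ⟨s, rfl, hs⟩
      · have := hp.1 t' htp
        simp only [wsum, List.map_cons, List.sum_cons, Step3.val] at this ⊢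
        omega
      · rcases prefix_cons_cases hs with rfl | ⟨s', rfl, hs'⟩
        · have := hp.2
          simp only [wsum, List.map_cons, List.sum_cons, List.map_append,
            List.sum_append, List.map_nil, List.sum_nil, Step3.val] at this ⊢
          omega
        · have ha := hq.1 s' hs'
          have hb := hp.2
          simp only [wsum, List.map_cons, List.sum_cons, List.map_append,
            List.sum_append, Step3.val] at ha hb ⊢
          omega
  · have ha := hp.2
    have hb := hq.2
    simp only [wsum, List.map_cons, List.sum_cons, List.map_append,
      List.sum_append, Step3.val] at ha hb ⊢
    omega

/-- first-return decomposition. -/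
lemma exists_split (l : List Step3) (h1 : ∀ t, t <+: l → (-1 : ℤ) ≤ wsum t)
    (h2 : wsum l = -1) :
    ∃ p q, l = p ++ Step3.down :: q ∧ IsMotzkin3 p ∧ IsMotzkin3 q := by
  classical
  have hex : ∃ k, wsum (l.take k) = -1 := ⟨l.length, by simpa using h2⟩
  obtain ⟨k, hkspec, hmin⟩ : ∃ k, wsum (l.take k) = -1 ∧ ∀ j < k, wsum (l.take j) ≠ -1 :=
    ⟨Nat.find hex, Nat.find_spec hex, fun j hj => Nat.find_min hex hj⟩
  have hnonneg : ∀ j < k, 0 ≤ wsum (l.take j) := by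
    intro j hj
    have ha := h1 (l.take j) (List.take_prefix _ _)
    have hb := hmin j hj
    omega
  have hk0 : k ≠ 0 := by
    intro h
    rw [h] at hkspec
    simp at hkspec
  obtain ⟨j, rfl⟩ : ∃ j, k = j + 1 := ⟨k - 1, by omega⟩
  have hjlt : j < l.length := by
    by_contra hge
    push_neg at hge
    have h1' : l.take j = l := List.take_of_length_le hge
    have h2' : l.take (j + 1) = l := List.take_of_length_le (by omega)
    have hc := hnonneg j (by omega)
    rw [h1'] at hc
    rw [h2'] at hkspec
    omega
  have hsplit : l = l.take j ++ l[j] :: l.drop (j + 1) := by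
    conv_lhs => rw [← List.take_append_drop j l]
    rw [List.drop_eq_getElem_cons hjlt]
  have htake : l.take (j + 1) = l.take j ++ [l[j]] := by
    rw [List.take_succ, List.getElem?_eq_getElem hjlt]
    rfl
  have hval : wsum (l.take (j + 1)) = wsum (l.take j) + (l[j]).val := by
    rw [htake, wsum_append, wsum_cons, wsum_nil]
    ring
  have hpnn : 0 ≤ wsum (l.take j) := hnonneg j (by omega)
  have hvcases := val_mem_cases (l[j])
  have hvd : (l[j]).val = -1 := by omega
  have hp0 : wsum (l.take j) = 0 := by omega
  have hdown : l[j] = Step3.down := by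
    rcases h : l[j] with _ | _ | c <;> rw [h] at hvd <;> simp [Step3.val] at hvd ⊢
  have hq0 : wsum (l.drop (j + 1)) = 0 := by
    have hsum : wsum l = wsum (l.take j) + (l[j]).val + wsum (l.drop (j + 1)) := by
      conv_lhs => rw [hsplit]
      rw [wsum_append, wsum_cons]
      ring
    omega
  refine ⟨l.take j, l.drop (j + 1), by rw [← hdown]; exact hsplit, ⟨?_, hp0⟩, ⟨?_, hq0⟩⟩
  · intro t ht
    have hlen : t.length ≤ j := by
      have h' := ht.length_le
      simp at h'
      omega
    have heq : t = l.take t.length :=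
      List.prefix_iff_eq_take.mp (ht.trans (List.take_prefix _ _))
    rw [heq]
    rcases eq_or_lt_of_le hlen with heq' | hlt
    · rw [heq']
      exact le_of_eq hp0.symm
    · exact hnonneg _ (by omega)
  · intro t ht
    obtain ⟨s, hs⟩ := ht
    have hle : l = (l.take j ++ Step3.down :: t) ++ s := by
      conv_lhs => rw [hsplit, hdown, ← hs]
      simp
    have hpre := h1 _ ⟨s, hle.symm⟩
    rw [wsum_append, wsum_cons] at hpre
    have hdv : Step3.val Step3.down = -1 := rfl
    show 0 ≤ wsum t
    omega

lemma decomp_key {p₁ q₁ p₂ q₂ : List Step3}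
    (h : p₁ ++ Step3.down :: q₁ = p₂ ++ Step3.down :: q₂)
    (hs₁ : wsum p₁ = 0) (hp₂ : IsMotzkin3 p₂) : ¬ p₁.length < p₂.length := by
  intro hlt
  have h1 : (p₁ ++ [Step3.down]) ++ q₁ = p₂ ++ Step3.down :: q₂ := by
    rw [← h]; simp
  have hpre : p₁ ++ [Step3.down] <+: p₂ := by
    have h2 : p₁ ++ [Step3.down] <+: p₂ ++ Step3.down :: q₂ := ⟨q₁, h1⟩
    have h3 := List.prefix_iff_eq_take.mp h2
    have hlen : (p₁ ++ [Step3.down]).length ≤ p₂.length := by simp; omega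
    rw [List.take_append_of_le_length hlen] at h3
    rw [h3]
    exact List.take_prefix _ _
  have h4 : 0 ≤ wsum (p₁ ++ [Step3.down]) := hp₂.1 _ hpre
  show False
  rw [wsum_append, wsum_cons, wsum_nil] at h4
  have hdv : Step3.val Step3.down = -1 := rfl
  omega

lemma decomp_unique {p₁ q₁ p₂ q₂ : List Step3}
    (h : p₁ ++ Step3.down :: q₁ = p₂ ++ Step3.down :: q₂)
    (hp₁ : IsMotzkin3 p₁) (hp₂ : IsMotzkin3 p₂) : p₁ = p₂ ∧ q₁ = q₂ := by
  have hlen : p₁.length = p₂.length := by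
    rcases Nat.lt_trichotomy p₁.length p₂.length with hlt | heq | hgt
    · exact absurd hlt (decomp_key h hp₁.2 hp₂)
    · exact heq
    · exact absurd hgt (decomp_key h.symm hp₂.2 hp₁)
  obtain ⟨ha, hb⟩ := List.append_inj h hlen
  exact ⟨ha, by injection hb⟩

/-- the gluing map realizing the first-return decomposition -/
def glue (n : ℕ) : (Fin 3 × S n) ⊕ (Σ k : Fin n, S k.1 × S (n - 1 - k.1)) → S (n + 1)
  | .inl (c, p) => ⟨Step3.level c :: p.1, by simp [p.2.1], isMotzkin3_level_cons.mpr p.2.2⟩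
  | .inr ⟨k, p, q⟩ => ⟨Step3.up :: (p.1 ++ Step3.down :: q.1), by
      have hp := p.2.1
      have hq := q.2.1
      have hk := k.2
      simp only [List.length_cons, List.length_append]
      omega, isMotzkin3_glue p.2.2 q.2.2⟩

lemma glue_bijective (n : ℕ) : Function.Bijective (glue n) := by
  constructor
  · rintro (⟨c₁, p₁⟩ | ⟨k₁, p₁, q₁⟩) (⟨c₂, p₂⟩ | ⟨k₂, p₂, q₂⟩) h <;>
      simp only [glue, Subtype.mk.injEq] at h
    · obtain ⟨hc, hp⟩ := List.cons_eq_cons.mp h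
      have hc' : c₁ = c₂ := by injection hc
      rw [hc', Subtype.ext hp]
    · exact absurd (List.cons_eq_cons.mp h).1 (by simp)
    · exact absurd (List.cons_eq_cons.mp h).1 (by simp)
    · obtain ⟨-, hpq⟩ := List.cons_eq_cons.mp h
      obtain ⟨hp, hq⟩ := decomp_unique hpq p₁.2.2 p₂.2.2
      have hk : k₁ = k₂ := Fin.ext (by rw [← p₁.2.1, ← p₂.2.1, hp])
      subst hk
      rw [Subtype.ext hp, Subtype.ext hq]
  · rintro ⟨l, hlen, hm⟩
    rcases l with _ | ⟨a, l'⟩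
    · simp at hlen
    · rcases a with _ | _ | c
      · -- up
        have hpre : ∀ t, t <+: l' → (-1 : ℤ) ≤ wsum t := by
          intro t ht
          have := hm.1 (Step3.up :: t) (by rw [List.cons_prefix_cons]; exact ⟨rfl, ht⟩)
          show (-1 : ℤ) ≤ wsum t
          simp only [wsum, List.map_cons, List.sum_cons, Step3.val] at this ⊢
          omega
        have hsum : wsum l' = -1 := by
          have := hm.2
          simp only [wsum, List.map_cons, List.sum_cons, Step3.val] at this ⊢
          omega
        obtain ⟨p, q, rfl, hp, hq⟩ := exists_split l' hpre hsum
        have hl : p.length + q.length + 2 = n + 1 := by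
          simp only [List.length_cons, List.length_append] at hlen
          omega
        refine ⟨.inr ⟨⟨p.length, by omega⟩, ⟨p, rfl, hp⟩, ⟨q, by show q.length = n - 1 - p.length; omega, hq⟩⟩, rfl⟩
      · -- down : impossible
        exfalso
        have := hm.1 [Step3.down] ⟨l', rfl⟩
        simp [wsum, Step3.val] at this
      · -- level
        refine ⟨.inl (c, ⟨l', by simpa using hlen, isMotzkin3_level_cons.mp hm⟩), rfl⟩

/-- the 3-coloured Motzkin numbers -/
def m : ℕ → ℕ
  | 0 => 1
  | n + 1 => 3 * m n + ∑ k : Fin n, m k.1 * m (n - 1 - k.1)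
  termination_by n => n
  decreasing_by
  · omega
  · exact Nat.lt_succ_of_lt k.isLt
  · omega

lemma card_sigma_fin {n : ℕ} (α : Fin n → Type*) [∀ i, Finite (α i)] :
    Nat.card (Σ i, α i) = ∑ i, Nat.card (α i) := by
  classical
  letI : ∀ i, Fintype (α i) := fun i => Fintype.ofFinite _
  simp [Nat.card_eq_fintype_card]

lemma card_S (n : ℕ) : Nat.card (S n) = m n := by
  induction n using Nat.strong_induction_on with
  | _ n ih =>
    match n with
    | 0 =>
      haveI : Unique (S 0) :=
        ⟨⟨⟨[], rfl, isMotzkin3_nil⟩⟩, fun ⟨l, hl, _⟩ => Subtype.ext (List.length_eq_zero_iff.mp hl)⟩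
      simp [Nat.card_unique, m]
    | n + 1 =>
      rw [← Nat.card_eq_of_bijective _ (glue_bijective n), Nat.card_sum, Nat.card_prod,
        card_sigma_fin]
      have h3 : Nat.card (Fin 3) = 3 := by simp
      rw [h3, ih n (by omega)]
      have hsum : ∀ k : Fin n, Nat.card (S k.1 × S (n - 1 - k.1)) = m k.1 * m (n - 1 - k.1) := by
        intro k
        rw [Nat.card_prod, ih k.1 (by omega), ih (n - 1 - k.1) (by omega)]
      rw [Finset.sum_congr rfl (fun k _ => hsum k)]
      rw [show m (n + 1) = 3 * m n + ∑ k : Fin n, m k.1 * m (n - 1 - k.1) from by rw [m]]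

lemma coeff_eq (M : PowerSeries ℚ) (hM : M = 1 + 3 * X * M + X ^ 2 * M ^ 2) (n : ℕ) :
    coeff n M = m n := by
  induction n using Nat.strong_induction_on with
  | _ n ih =>
    match n with
    | 0 =>
      conv_lhs => rw [hM]
      simp [coeff_zero_eq_constantCoeff, m]
    | k + 1 =>
      have h1 : coeff (k + 1) (3 * X * M) = 3 * coeff k M := by
        have he : (3 : ℚ⟦X⟧) * X * M = X * M + X * M + X * M := by ring
        rw [he, map_add, map_add, coeff_succ_X_mul]
        ring
      have h2 : coeff (k + 1) (X ^ 2 * M ^ 2) =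
          if 2 ≤ k + 1 then coeff (k + 1 - 2) (M ^ 2) else 0 := coeff_X_pow_mul' (M ^ 2) 2 (k + 1)
      conv_lhs => rw [hM]
      rw [map_add, map_add, h1, h2]
      rcases k with _ | j
      · simp [ih 0 (by omega), m]
      · have hcm : coeff j (M ^ 2) = ∑ i ∈ Finset.range (j + 1),
            (m i : ℚ) * m (j - i) := by
          rw [sq, PowerSeries.coeff_mul, Finset.Nat.sum_antidiagonal_eq_sum_range_succ_mk]
          refine Finset.sum_congr rfl fun i hi => ?_
          rw [Finset.mem_range] at hi
          show coeff i M * coeff (j - i) M = _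
          rw [ih i (by omega), ih (j - i) (by omega)]
        rw [if_pos (by omega), show j + 1 + 1 - 2 = j from rfl, hcm, ih (j + 1) (by omega)]
        have hm2 : m (j + 2) = 3 * m (j + 1) + ∑ k : Fin (j + 1), m k.1 * m (j + 1 - 1 - k.1) := by
          rw [m]
        rw [hm2]
        push_cast
        rw [show (coeff (j + 1 + 1)) (1 : ℚ⟦X⟧) = 0 from by simp,
          Fin.sum_univ_eq_sum_range (fun k => (m k : ℚ) * m (j - k))]
        ring

end Motzkin3Aux


/-- The number of 3-coloured Motzkin paths of length `n` is the coefficient of `Xⁿ`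
in the unique power series `M` with `M = 1 + 3XM + X²M²`. -/
theorem card_motzkin3_eq_coeff (M : PowerSeries ℚ)
    (hM : M = 1 + 3 * X * M + X ^ 2 * M ^ 2) (n : ℕ) :
    (Nat.card {l : List Step3 // l.length = n ∧ IsMotzkin3 l} : ℚ) = coeff n M := by
  rw [Motzkin3Aux.coeff_eq M hM n]
  norm_cast
  exact Motzkin3Aux.card_S n
end

section
/- For every natural number n, the number of 2-coloured Motzkin paths of length n equals the Catalan number C(n+1). Equivalently, for n ≥ 1, the number of Dyck paths of length 2n equals the number of 2-coloured Motzkin paths of length n−1. -/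
/-- A step of a 2-coloured Motzkin path: an up-step, a down-step, or a horizontal
step in one of two colours. -/
inductive Step2 : Type
  | up : Step2
  | down : Step2
  | level : Fin 2 → Step2

/-- The value (height change) of a 2-coloured Motzkin step. -/
def Step2.val : Step2 → ℤ
  | .up => 1
  | .down => -1
  | .level _ => 0

/-- A step of a Dyck path: an up-step or a down-step. -/
inductive StepUD : Type
  | up : StepUD
  | down : StepUD

/-- The value (height change) of a Dyck step. -/
def StepUD.val : StepUD → ℤ
  | .up => 1
  | .down => -1

/-- A list of steps is a 2-coloured Motzkin path if every prefix sum of the values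
is nonnegative and the total sum is `0`. -/
def IsMotzkin2 (l : List Step2) : Prop :=
  (∀ t : List Step2, t <+: l → 0 ≤ (t.map Step2.val).sum) ∧ (l.map Step2.val).sum = 0

/-- A list of up/down steps is a Dyck path if every prefix sum of the values is
nonnegative and the total sum is `0`. -/
def IsDyck (l : List StepUD) : Prop :=
  (∀ t : List StepUD, t <+: l → 0 ≤ (t.map StepUD.val).sum) ∧ (l.map StepUD.val).sum = 0

namespace CardMotzkinAux

open List

/-- Height sum of a Dyck word. -/
def hsum (l : List StepUD) : ℤ := (l.map StepUD.val).sum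

/-- Height sum of a Motzkin word. -/
def msum (l : List Step2) : ℤ := (l.map Step2.val).sum

@[simp] lemma hsum_nil : hsum [] = 0 := rfl
@[simp] lemma hsum_cons (a : StepUD) (l : List StepUD) : hsum (a :: l) = a.val + hsum l := by
  simp [hsum]
@[simp] lemma hsum_append (l₁ l₂ : List StepUD) : hsum (l₁ ++ l₂) = hsum l₁ + hsum l₂ := by
  simp [hsum]
@[simp] lemma msum_nil : msum [] = 0 := rfl
@[simp] lemma msum_cons (a : Step2) (l : List Step2) : msum (a :: l) = a.val + msum l := by
  simp [msum]
@[simp] lemma msum_append (l₁ l₂ : List Step2) : msum (l₁ ++ l₂) = msum l₁ + msum l₂ := by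
  simp [msum]

@[simp] lemma hsum_def' (l : List StepUD) : (l.map StepUD.val).sum = hsum l := rfl
@[simp] lemma msum_def' (l : List Step2) : (l.map Step2.val).sum = msum l := rfl

lemma hsum_take_succ (w : List StepUD) (i : ℕ) (h : i < w.length) :
    hsum (w.take (i + 1)) = hsum (w.take i) + w[i].val := by
  have h2 := List.sum_take_succ (w.map StepUD.val) i (by simpa using h)
  simpa [hsum, List.map_take, List.getElem_map] using h2

lemma hsum_take_drop (w : List StepUD) (k : ℕ) :
    hsum w = hsum (w.take k) + hsum (w.drop k) := by
  rw [← hsum_append, List.take_append_drop]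

lemma isDyck_iff (l : List StepUD) :
    IsDyck l ↔ (∀ t, t <+: l → 0 ≤ hsum t) ∧ hsum l = 0 := Iff.rfl

lemma isMotzkin2_iff (l : List Step2) :
    IsMotzkin2 l ↔ (∀ t, t <+: l → 0 ≤ msum t) ∧ msum l = 0 := Iff.rfl

lemma StepUD.val_cases (a : StepUD) : a.val = 1 ∨ a.val = -1 := by
  cases a <;> simp [StepUD.val]

lemma prefix_append_iff' {α : Type*} {t u v : List α} :
    t <+: u ++ v ↔ t <+: u ∨ ∃ s, t = u ++ s ∧ s <+: v := by
  constructor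
  · rintro ⟨r, hr⟩
    rcases List.append_eq_append_iff.mp hr with ⟨c, hc1, _⟩ | ⟨c, hc1, hc2⟩
    · exact Or.inl ⟨c, hc1.symm⟩
    · exact Or.inr ⟨c, hc1, ⟨r, hc2.symm⟩⟩
  · rintro (h | ⟨s, rfl, ⟨r, rfl⟩⟩)
    · exact h.trans (u.prefix_append v)
    · exact ⟨r, by simp⟩

lemma prefix_pair {α : Type*} {s : List α} {x y : α} (h : s <+: [x, y]) :
    s = [] ∨ s = [x] ∨ s = [x, y] := by
  match s with
  | [] => exact Or.inl rfl
  | [a] =>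
    rw [List.cons_prefix_cons] at h
    exact Or.inr (Or.inl (by rw [h.1]))
  | a :: b :: s' =>
    rw [List.cons_prefix_cons] at h
    obtain ⟨rfl, h⟩ := h
    rw [List.cons_prefix_cons] at h
    obtain ⟨rfl, h⟩ := h
    simp at h
    exact Or.inr (Or.inr (by rw [h]))

/-! ### Dyck paths: decomposition and composition -/

lemma dyck_comp {p q : List StepUD} (hp : IsDyck p) (hq : IsDyck q) :
    IsDyck (.up :: p ++ .down :: q) := by
  have hp2 : hsum p = 0 := by simpa using hp.2
  have hq2 : hsum q = 0 := by simpa using hq.2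
  refine ⟨?_, ?_⟩
  · intro t ht
    simp only [hsum_def']
    rcases prefix_append_iff'.mp ht with h | ⟨s, rfl, hs⟩
    · match t with
      | [] => simp
      | b :: t' =>
        rw [List.cons_prefix_cons] at h
        obtain ⟨rfl, h⟩ := h
        have h1 : 0 ≤ hsum t' := by simpa using hp.1 _ h
        simp only [hsum_cons, StepUD.val]
        omega
    · match s with
      | [] =>
        simp only [hsum_append, hsum_cons, hsum_nil, StepUD.val]
        omega
      | c :: s' =>
        rw [List.cons_prefix_cons] at hs
        obtain ⟨rfl, hs⟩ := hs
        have h2 : 0 ≤ hsum s' := by simpa using hq.1 _ hs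
        simp only [hsum_append, hsum_cons, StepUD.val]
        omega
  · simp only [hsum_def', hsum_append, hsum_cons, hsum_nil, StepUD.val]
    omega

lemma hsum_take_nonneg_aux {l : List StepUD} (h : IsDyck l) (k : ℕ) :
    0 ≤ hsum (l.take k) :=
  h.1 _ (List.take_prefix k l)

lemma dyck_decomp {l : List StepUD} (hl : IsDyck l) (hne : l ≠ []) :
    ∃ p q, IsDyck p ∧ IsDyck q ∧ l = .up :: p ++ .down :: q := by
  match l with
  | a :: w =>
    have ha : a = .up := by
      have := hl.1 [a] ⟨w, rfl⟩
      cases a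
      · rfl
      · exfalso
        simp only [hsum_def', hsum_cons, hsum_nil, StepUD.val] at this
        omega
    subst ha
    have hStot : hsum (w.take w.length) = -1 := by
      have := hl.2
      simp only [hsum_def', hsum_cons, StepUD.val] at this
      rw [List.take_length]
      omega
    have hSlb : ∀ j, -1 ≤ hsum (w.take j) := by
      intro j
      have hpre : (StepUD.up :: w.take j) <+: (.up :: w) := by
        rw [List.cons_prefix_cons]
        exact ⟨rfl, List.take_prefix j w⟩
      have := hl.1 _ hpre
      simp only [hsum_def', hsum_cons, StepUD.val] at this
      omega
    have hex : ∃ j, hsum (w.take j) = -1 := ⟨w.length, hStot⟩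
    set k := Nat.find hex with hk
    have hkspec : hsum (w.take k) = -1 := Nat.find_spec hex
    have hkmin : ∀ j, j < k → hsum (w.take j) ≠ -1 := fun j hj => Nat.find_min hex hj
    have hklen : k ≤ w.length := Nat.find_min' hex hStot
    have hSpos : ∀ j, j < k → 0 ≤ hsum (w.take j) := by
      intro j hj
      have h1 := hSlb j
      have h2 := hkmin j hj
      omega
    have hk1 : 1 ≤ k := by
      by_contra h
      have : k = 0 := by omega
      rw [this] at hkspec
      simp at hkspec
    have hidx : k - 1 < w.length := by omega
    have hstep : hsum (w.take k) = hsum (w.take (k - 1)) + (w[k - 1]).val := by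
      have := hsum_take_succ w (k - 1) hidx
      rw [show k - 1 + 1 = k by omega] at this
      exact this
    have hSk1 : 0 ≤ hsum (w.take (k - 1)) := hSpos _ (by omega)
    have hdown : w[k - 1] = .down ∧ hsum (w.take (k - 1)) = 0 := by
      rcases StepUD.val_cases w[k - 1] with h | h
      · exfalso; omega
      · refine ⟨?_, by omega⟩
        cases hw : w[k - 1]
        · rw [hw] at h; simp [StepUD.val] at h
        · rfl
    refine ⟨w.take (k - 1), w.drop k, ⟨?_, hdown.2⟩, ⟨?_, ?_⟩, ?_⟩
    · intro t ht
      simp only [hsum_def']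
      rw [List.prefix_iff_eq_take.mp ht, List.take_take]
      rcases Nat.le_total t.length (k - 1) with h | h
      · rw [min_eq_left h]
        exact hSpos _ (by omega)
      · rw [min_eq_right h]
        exact hSk1
    · intro t ht
      simp only [hsum_def']
      rw [List.prefix_iff_eq_take.mp ht]
      have h2 : hsum (w.take (k + t.length)) =
          hsum (w.take k) + hsum ((w.drop k).take t.length) := by
        rw [List.take_add]
        simp
      have h3 := hSlb (k + t.length)
      omega
    · have h4 := hsum_take_drop w k
      have hw : hsum w = -1 := by rw [List.take_length] at hStot; exact hStot
      simp only [hsum_def']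
      omega
    · have hww : w = w.take (k - 1) ++ w[k - 1] :: w.drop k := by
        conv_lhs => rw [← List.take_append_drop (k - 1) w]
        congr 1
        rw [List.drop_eq_getElem_cons hidx]
        congr 2
        omega
      rw [hdown.1] at hww
      rw [List.cons_append]
      rw [← hww]
lemma dyck_cancel {p p' : List StepUD} {q q' : List StepUD}
    (hp : IsDyck p) (hp' : IsDyck p')
    (h : p ++ .down :: q = p' ++ .down :: q') : p = p' ∧ q = q' := by
  have key : ∀ (x x' : List StepUD) (y y' : List StepUD), IsDyck x → IsDyck x' →
      x ++ .down :: y = x' ++ .down :: y' → x <+: x' → x = x' := by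
    intro x x' y y' hx hx' heq hpre
    obtain ⟨r, rfl⟩ := hpre
    match r with
    | [] => simp
    | b :: r' =>
      exfalso
      rw [List.append_assoc] at heq
      have := List.append_cancel_left heq
      have hb : b = .down := by
        have := congrArg (fun l => l.head?) this
        simpa using this.symm
      subst hb
      have : (x ++ [StepUD.down]) <+: (x ++ .down :: r') := ⟨r', by simp⟩
      have := hx'.1 _ this
      have := hx.2
      simp [StepUD.val] at *
      omega
  have hpp' : p <+: p' ∨ p' <+: p := by
    apply List.prefix_or_prefix_of_prefix (l₃ := p ++ .down :: q)
    · exact ⟨_, rfl⟩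
    · rw [h]; exact ⟨_, rfl⟩
  have hpe : p = p' := by
    rcases hpp' with h1 | h1
    · exact key p p' q q' hp hp' h h1
    · exact (key p' p q' q hp' hp h.symm h1).symm
  subst hpe
  have := List.append_cancel_left h
  simp at this
  exact ⟨rfl, this⟩

/-! ### Trees to Dyck paths -/

def t2d : Tree Unit → List StepUD
  | .nil => []
  | .node _ a b => .up :: t2d a ++ .down :: t2d b

lemma t2d_length (t : Tree Unit) : (t2d t).length = 2 * t.numNodes := by
  induction t with
  | nil => simp [t2d, Tree.numNodes]
  | node _ a b iha ihb =>
    simp [t2d, Tree.numNodes, iha, ihb]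
    omega

lemma t2d_isDyck (t : Tree Unit) : IsDyck (t2d t) := by
  induction t with
  | nil =>
    refine ⟨?_, rfl⟩
    intro t ht
    rw [show t2d .nil = [] from rfl, List.prefix_nil] at ht
    subst ht
    simp
  | node _ a b iha ihb => exact dyck_comp iha ihb

lemma t2d_inj : Function.Injective t2d := by
  intro t
  induction t with
  | nil =>
    intro t' h
    cases t' with
    | nil => rfl
    | node _ a b => simp [t2d] at h
  | node _ a b iha ihb =>
    intro t' h
    cases t' with
    | nil => simp [t2d] at h
    | node u a' b' =>
      simp only [t2d] at h
      rw [List.cons_append, List.cons_append, List.cons.injEq] at h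
      obtain ⟨a_eq, b_eq⟩ := dyck_cancel (t2d_isDyck a) (t2d_isDyck a') h.2
      rw [iha a_eq, ihb b_eq]

lemma t2d_surj : ∀ (n : ℕ) (l : List StepUD), l.length = n → IsDyck l → ∃ t, t2d t = l := by
  intro n
  induction n using Nat.strong_induction_on with
  | _ n ih =>
    intro l hlen hl
    rcases eq_or_ne l [] with rfl | hne
    · exact ⟨.nil, rfl⟩
    · obtain ⟨p, q, hp, hq, rfl⟩ := dyck_decomp hl hne
      subst hlen
      have hlp : p.length < (StepUD.up :: p ++ .down :: q).length := by simp
      have hlq : q.length < (StepUD.up :: p ++ .down :: q).length := by simp; omega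
      obtain ⟨ta, rfl⟩ := ih p.length hlp p rfl hp
      obtain ⟨tb, rfl⟩ := ih q.length hlq q rfl hq
      exact ⟨.node () ta tb, rfl⟩

lemma card_dyck (n : ℕ) :
    Nat.card {l : List StepUD // l.length = 2 * n ∧ IsDyck l} = catalan n := by
  have h1 : Nat.card {t : Tree Unit // t.numNodes = n} =
      Nat.card {l : List StepUD // l.length = 2 * n ∧ IsDyck l} := by
    apply Nat.card_eq_of_bijective
      (f := fun t => (⟨t2d t.1, by rw [t2d_length, t.2], t2d_isDyck t.1⟩ :
        {l : List StepUD // l.length = 2 * n ∧ IsDyck l}))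
    constructor
    · intro t t' h
      exact Subtype.ext (t2d_inj (congrArg Subtype.val h))
    · rintro ⟨l, hlen, hd⟩
      obtain ⟨t, rfl⟩ := t2d_surj l.length l rfl hd
      refine ⟨⟨t, ?_⟩, rfl⟩
      have := t2d_length t
      omega
  rw [← h1]
  have e : {t : Tree Unit // t.numNodes = n} ≃ {t : Tree Unit // t ∈ Tree.treesOfNumNodesEq n} :=
    Equiv.subtypeEquivRight (fun t => BinaryTree.mem_treesOfNumNodesEq.symm)
  rw [Nat.card_congr e, Nat.card_eq_fintype_card, Fintype.card_coe,
    BinaryTree.treesOfNumNodesEq_card_eq_catalan]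

/-! ### Motzkin paths to Dyck paths -/

def enc : Step2 → List StepUD
  | .up => [.up, .up]
  | .down => [.down, .down]
  | .level c => if c = 0 then [.up, .down] else [.down, .up]

def dec2 : StepUD → StepUD → Step2
  | .up, .up => .up
  | .down, .down => .down
  | .up, .down => .level 0
  | .down, .up => .level 1

lemma enc_dec2 (a b : StepUD) : enc (dec2 a b) = [a, b] := by
  cases a <;> cases b <;> simp [enc, dec2]

def decode : List StepUD → List Step2
  | a :: b :: w => dec2 a b :: decode w
  | _ => []

lemma dec2_enc (a : Step2) : ∃ x y, enc a = [x, y] ∧ dec2 x y = a := by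
  cases a with
  | up => exact ⟨.up, .up, rfl, rfl⟩
  | down => exact ⟨.down, .down, rfl, rfl⟩
  | level c =>
    fin_cases c
    · exact ⟨.up, .down, rfl, rfl⟩
    · exact ⟨.down, .up, by simp [enc], rfl⟩

lemma decode_mb (m : List Step2) : decode (m.flatMap enc) = m := by
  induction m with
  | nil => rfl
  | cons a m ih =>
    obtain ⟨x, y, hxy, hd⟩ := dec2_enc a
    rw [List.flatMap_cons, hxy]
    show decode (x :: y :: m.flatMap enc) = a :: m
    rw [decode, hd, ih]

lemma mb_inj : Function.Injective (fun m : List Step2 => m.flatMap enc) := by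
  intro m m' h
  have := congrArg decode h
  simpa [decode_mb] using this

lemma mb_decode : ∀ (n : ℕ) (w : List StepUD), w.length = 2 * n → (decode w).flatMap enc = w := by
  intro n
  induction n with
  | zero =>
    intro w hw
    rw [List.length_eq_zero_iff] at hw
    subst hw; rfl
  | succ n ih =>
    intro w hw
    match w with
    | a :: b :: w' =>
      have hw' : w'.length = 2 * n := by
        simp only [List.length_cons] at hw
        omega
      rw [decode, List.flatMap_cons, enc_dec2, ih w' hw']
      rfl
    | [] => simp at hw
    | [a] => simp at hw; omega

lemma mb_length (m : List Step2) : (m.flatMap enc).length = 2 * m.length := by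
  induction m with
  | nil => rfl
  | cons a m ih =>
    rw [List.flatMap_cons]
    obtain ⟨x, y, hxy, -⟩ := dec2_enc a
    simp [hxy, ih]
    omega

lemma hsum_enc (a : Step2) : hsum (enc a) = 2 * a.val := by
  cases a with
  | up => simp [enc, StepUD.val, Step2.val]
  | down => simp [enc, StepUD.val, Step2.val]
  | level c =>
    rcases eq_or_ne c 0 with h | h <;>
      simp [enc, h, StepUD.val, Step2.val]

lemma hsum_mb (m : List Step2) : hsum (m.flatMap enc) = 2 * msum m := by
  induction m with
  | nil => rfl
  | cons a m ih =>
    rw [List.flatMap_cons, hsum_append, hsum_enc, ih, msum_cons]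
    ring

lemma prefix_mb {t : List StepUD} {m : List Step2} (h : t <+: m.flatMap enc) :
    ∃ m₁ s, m₁ <+: m ∧ t = m₁.flatMap enc ++ s ∧
      (s = [] ∨ ∃ a, (m₁ ++ [a]) <+: m ∧ s <+: enc a) := by
  induction m generalizing t with
  | nil =>
    simp only [List.flatMap_nil, List.prefix_nil] at h
    exact ⟨[], [], by simp [h]⟩
  | cons a m ih =>
    rw [List.flatMap_cons] at h
    rcases prefix_append_iff'.mp h with h | ⟨s, rfl, hs⟩
    · exact ⟨[], t, by simp, by simp, Or.inr ⟨a, by simp [List.cons_prefix_cons], h⟩⟩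
    · obtain ⟨m₁, s', hm₁, hts, hor⟩ := ih hs
      refine ⟨a :: m₁, s', ?_, ?_, ?_⟩
      · rw [List.cons_prefix_cons]; exact ⟨rfl, hm₁⟩
      · rw [List.flatMap_cons, hts, List.append_assoc]
      · rcases hor with h | ⟨b, hb, hsb⟩
        · exact Or.inl h
        · refine Or.inr ⟨b, ?_, hsb⟩
          rw [show a :: m₁ ++ [b] = a :: (m₁ ++ [b]) by simp, List.cons_prefix_cons]
          exact ⟨rfl, hb⟩

def g (m : List Step2) : List StepUD := .up :: m.flatMap enc ++ [.down]

lemma hsum_prefix_enc {a : Step2} {s : List StepUD} (hs : s <+: enc a) {σ : ℤ}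
    (h0 : 0 ≤ σ) (h1 : 0 ≤ σ + a.val) : 0 ≤ 1 + 2 * σ + hsum s := by
  cases a with
  | up =>
    rcases prefix_pair hs with rfl | rfl | rfl <;>
      simp [StepUD.val] <;> omega
  | down =>
    simp only [Step2.val] at h1
    rcases prefix_pair hs with rfl | rfl | rfl <;>
      simp [StepUD.val] <;> omega
  | level c =>
    simp only [Step2.val, add_zero] at h1
    rcases eq_or_ne c 0 with h | h <;> simp only [enc, if_pos, if_neg, h] at hs
    · rcases prefix_pair hs with rfl | rfl | rfl <;>
        simp [StepUD.val] <;> omega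
    · rcases prefix_pair hs with rfl | rfl | rfl <;>
        simp [StepUD.val] <;> omega

lemma g_isDyck {m : List Step2} (hm : IsMotzkin2 m) : IsDyck (g m) := by
  have hm2 : msum m = 0 := by simpa using hm.2
  refine ⟨?_, ?_⟩
  · intro t ht
    simp only [hsum_def']
    rw [g] at ht
    rcases prefix_append_iff'.mp ht with h | ⟨s, rfl, hs⟩
    · match t with
      | [] => simp
      | b :: t' =>
        rw [List.cons_prefix_cons] at h
        obtain ⟨rfl, h⟩ := h
        obtain ⟨m₁, s, hm₁, rfl, hor⟩ := prefix_mb h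
        have hσ : 0 ≤ msum m₁ := by simpa using hm.1 _ hm₁
        rcases hor with rfl | ⟨a, ha, hsa⟩
        · simp only [hsum_cons, hsum_append, hsum_nil, hsum_mb, StepUD.val]
          omega
        · have hσ' : 0 ≤ msum m₁ + a.val := by
            have := hm.1 _ ha
            simpa using this
          have h3 := hsum_prefix_enc hsa hσ hσ'
          simp only [hsum_cons, hsum_append, hsum_mb, StepUD.val]
          omega
    · have hs' : s = [] ∨ s = [.down] := by
        match s with
        | [] => exact Or.inl rfl
        | b :: s' =>
          rw [List.cons_prefix_cons] at hs
          obtain ⟨rfl, hs⟩ := hs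
          rw [List.prefix_nil] at hs
          subst hs
          exact Or.inr rfl
      rcases hs' with rfl | rfl <;>
        simp only [hsum_cons, hsum_append, hsum_nil, hsum_mb, StepUD.val] <;>
          omega
  · rw [g]
    simp only [hsum_def', hsum_append, hsum_cons, hsum_nil, hsum_mb, StepUD.val]
    omega

lemma g_motzkin {m : List Step2} (hd : IsDyck (g m)) : IsMotzkin2 m := by
  have htot : msum m = 0 := by
    have := hd.2
    rw [g] at this
    simp only [hsum_def', hsum_append, hsum_cons, hsum_nil, hsum_mb, StepUD.val] at this
    omega
  refine ⟨?_, by simpa using htot⟩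
  intro t ht
  simp only [msum_def']
  obtain ⟨m₂, rfl⟩ := ht
  have hpre : (StepUD.up :: t.flatMap enc) <+: g (t ++ m₂) := by
    refine ⟨m₂.flatMap enc ++ [.down], ?_⟩
    simp [g, List.flatMap_append]
  have := hd.1 _ hpre
  simp only [hsum_def', hsum_cons, hsum_mb, StepUD.val] at this
  omega

end CardMotzkinAux

namespace CardMotzkinAux

lemma g_inj : Function.Injective g := by
  intro m m' h
  rw [g, g] at h
  have h2 := List.append_cancel_right h
  injection h2 with _ h3
  exact mb_inj h3

lemma card_motzkin (n : ℕ) :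
    Nat.card {l : List Step2 // l.length = n ∧ IsMotzkin2 l} =
      Nat.card {l : List StepUD // l.length = 2 * (n + 1) ∧ IsDyck l} := by
  apply Nat.card_eq_of_bijective
    (f := fun m => (⟨g m.1, by
      simp only [g, List.length_append, List.length_cons, mb_length, m.2.1, List.length_nil]
      omega, g_isDyck m.2.2⟩ :
      {l : List StepUD // l.length = 2 * (n + 1) ∧ IsDyck l}))
  constructor
  · intro m m' h
    exact Subtype.ext (g_inj (congrArg Subtype.val h))
  · rintro ⟨l, hlen, hd⟩
    match l with
    | [] => simp at hlen
    | a :: w =>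
      have ha : a = .up := by
        have := hd.1 [a] ⟨w, rfl⟩
        cases a
        · rfl
        · exfalso
          simp only [hsum_def', hsum_cons, hsum_nil, StepUD.val] at this
          omega
      subst ha
      rcases List.eq_nil_or_concat w with rfl | ⟨w₂, b, rfl⟩
      · simp only [List.length_cons, List.length_nil] at hlen; omega
      · have hb : b = .down := by
          have h1 := hd.2
          have h2 := hd.1 (.up :: w₂) ⟨[b], by simp⟩
          simp only [List.concat_eq_append, hsum_def', hsum_cons, hsum_append, hsum_nil,
            StepUD.val] at h1 h2
          cases b
          · exfalso
            simp only [StepUD.val] at h1 h2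
            omega
          · rfl
        subst hb
        rw [List.concat_eq_append] at hlen hd
        have hw₂ : w₂.length = 2 * n := by
          simp only [List.length_cons, List.length_append, List.length_nil] at hlen
          omega
        have hmb : (decode w₂).flatMap enc = w₂ := mb_decode n w₂ hw₂
        have hg : g (decode w₂) = .up :: w₂ ++ [.down] := by
          rw [g, hmb]
        have hmlen : (decode w₂).length = n := by
          have := mb_length (decode w₂)
          rw [hmb] at this
          omega
        have hmot : IsMotzkin2 (decode w₂) := by
          apply g_motzkin
          rw [hg]
          exact hd
        refine ⟨⟨decode w₂, hmlen, hmot⟩, ?_⟩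
        apply Subtype.ext
        show g (decode w₂) = .up :: w₂.concat .down
        rw [hg, List.concat_eq_append]
        exact List.cons_append

end CardMotzkinAux

/-- The number of 2-coloured Motzkin paths of length `n` is the Catalan number
`C (n+1)`; equivalently, for `n ≥ 1` the Dyck paths of length `2n` are equinumerous
with the 2-coloured Motzkin paths of length `n - 1`. -/
theorem card_motzkin2_eq_catalan :
    (∀ n : ℕ,
      Nat.card {l : List Step2 // l.length = n ∧ IsMotzkin2 l} = catalan (n + 1)) ∧
    ∀ n : ℕ, 1 ≤ n →
      Nat.card {l : List StepUD // l.length = 2 * n ∧ IsDyck l} =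
        Nat.card {l : List Step2 // l.length = n - 1 ∧ IsMotzkin2 l} := by
  constructor
  · intro n
    rw [CardMotzkinAux.card_motzkin n, CardMotzkinAux.card_dyck (n + 1)]
  · intro n hn
    rw [CardMotzkinAux.card_dyck n, CardMotzkinAux.card_motzkin (n - 1),
      CardMotzkinAux.card_dyck (n - 1 + 1)]
    congr 1
    omega
end

section
/- For every N ≥ 1, the number of 3-coloured Motzkin paths of length N−1 equals Σ_{k=1}^{N} C(k)·binom(N−1, k−1), where C(k) denotes the k-th Catalan number. -/
namespace M3

open Finset

instance : DecidableEq Step3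
  | .up, .up => isTrue rfl
  | .down, .down => isTrue rfl
  | .level i, .level j => decidable_of_iff (i = j) (by simp)
  | .up, .down => isFalse (fun h => Step3.noConfusion h)
  | .up, .level _ => isFalse (fun h => Step3.noConfusion h)
  | .down, .up => isFalse (fun h => Step3.noConfusion h)
  | .down, .level _ => isFalse (fun h => Step3.noConfusion h)
  | .level _, .up => isFalse (fun h => Step3.noConfusion h)
  | .level _, .down => isFalse (fun h => Step3.noConfusion h)

instance : Fintype Step3 :=
  Fintype.ofList [.up, .down, .level 0, .level 1, .level 2] (by
    intro x
    cases x with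
    | level i => fin_cases i <;> simp
    | _ => simp)

/-- prefix-sum value -/
def sv (l : List Step3) : ℤ := (l.map Step3.val).sum

@[simp] lemma sv_nil : sv [] = 0 := rfl
@[simp] lemma sv_cons (a : Step3) (l : List Step3) : sv (a :: l) = a.val + sv l := by
  simp [sv]
@[simp] lemma sv_append (l r : List Step3) : sv (l ++ r) = sv l + sv r := by
  simp [sv]

lemma isMotzkin3_iff (l : List Step3) :
    IsMotzkin3 l ↔ (∀ k, 0 ≤ sv (l.take k)) ∧ sv l = 0 := by
  constructor
  · rintro ⟨h1, h2⟩
    exact ⟨fun k => h1 _ (List.take_prefix k l), h2⟩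
  · rintro ⟨h1, h2⟩
    refine ⟨fun t ht => ?_, h2⟩
    rw [List.prefix_iff_eq_take.mp ht]
    exact h1 _

instance : DecidablePred IsMotzkin3 := fun l =>
  decidable_of_iff ((∀ t ∈ l.inits, 0 ≤ (t.map Step3.val).sum) ∧ (l.map Step3.val).sum = 0)
    (by simp [IsMotzkin3, List.mem_inits])

/-- all lists of a given length -/
def lists : ℕ → Finset (List Step3)
  | 0 => {[]}
  | n + 1 => (Finset.univ ×ˢ lists n).image (fun p : Step3 × List Step3 => p.1 :: p.2)

@[simp] lemma mem_lists (n : ℕ) (l : List Step3) : l ∈ lists n ↔ l.length = n := by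
  induction n generalizing l with
  | zero => cases l <;> simp [lists]
  | succ n ih =>
    cases l with
    | nil => simp [lists]
    | cons a t => simp [lists, ih]

def MS (n : ℕ) : Finset (List Step3) := (lists n).filter IsMotzkin3

lemma mem_MS {n : ℕ} {l : List Step3} : l ∈ MS n ↔ l.length = n ∧ IsMotzkin3 l := by
  simp [MS]

def m (n : ℕ) : ℕ := (MS n).card

lemma m_zero : m 0 = 1 := by
  have h : MS 0 = {[]} := by
    ext l
    simp only [mem_MS, List.length_eq_zero_iff, Finset.mem_singleton]
    constructor
    · rintro ⟨rfl, _⟩; rfl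
    · rintro rfl
      refine ⟨rfl, ⟨?_, rfl⟩⟩
      intro t ht
      simp [List.prefix_nil.mp ht]
  rw [m, h, Finset.card_singleton]



lemma prefix_append_cases {α : Type*} {t p r : List α} (h : t <+: p ++ r) :
    t <+: p ∨ ∃ s, t = p ++ s ∧ s <+: r := by
  induction p generalizing t with
  | nil => exact Or.inr ⟨t, by simpa using h⟩
  | cons a p ih =>
    cases t with
    | nil => exact Or.inl (List.nil_prefix)
    | cons b t =>
      rw [List.cons_append, List.cons_prefix_cons] at h
      obtain ⟨rfl, h⟩ := h
      rcases ih h with h' | ⟨s, rfl, hs⟩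
      · exact Or.inl (List.cons_prefix_cons.mpr ⟨rfl, h'⟩)
      · exact Or.inr ⟨s, rfl, hs⟩

lemma val_cases (x : Step3) : x.val = 1 ∨ x.val = -1 ∨ x.val = 0 := by
  cases x <;> simp [Step3.val]

lemma eq_down_of_val (x : Step3) (h : x.val = -1) : x = Step3.down := by
  cases x <;> simp_all [Step3.val]

lemma motzkin_cons_level (c : Fin 3) (l : List Step3) :
    IsMotzkin3 (Step3.level c :: l) ↔ IsMotzkin3 l := by
  simp only [isMotzkin3_iff]
  constructor
  · rintro ⟨h1, h2⟩
    refine ⟨fun k => ?_, by simpa [Step3.val] using h2⟩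
    have := h1 (k + 1)
    simpa [Step3.val] using this
  · rintro ⟨h1, h2⟩
    refine ⟨fun k => ?_, by simp [Step3.val, h2]⟩
    cases k with
    | zero => simp
    | succ k => simpa [Step3.val] using h1 k

lemma motzkin_up_down {p q : List Step3} (hp : IsMotzkin3 p) (hq : IsMotzkin3 q) :
    IsMotzkin3 (Step3.up :: (p ++ Step3.down :: q)) := by
  constructor
  · intro t ht
    cases t with
    | nil => simp [sv]
    | cons b t =>
      rw [List.cons_prefix_cons] at ht
      obtain ⟨rfl, ht⟩ := ht
      rcases prefix_append_cases ht with h' | ⟨s, rfl, hs⟩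
      · have := hp.1 _ h'
        show (0:ℤ) ≤ sv (Step3.up :: t)
        simp only [sv_cons]
        have : (0:ℤ) ≤ sv t := this
        simp [Step3.val]; omega
      · cases s with
        | nil =>
          show (0:ℤ) ≤ sv (Step3.up :: (p ++ []))
          have hp0 : sv p = 0 := hp.2
          simp [Step3.val, hp0]
        | cons b' s =>
          rw [List.cons_prefix_cons] at hs
          obtain ⟨rfl, hs⟩ := hs
          have hs0 : (0:ℤ) ≤ sv s := hq.1 _ hs
          have hp0 : sv p = 0 := hp.2
          show (0:ℤ) ≤ sv (Step3.up :: (p ++ Step3.down :: s))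
          simp [Step3.val, hp0]; omega
  · have hp0 : sv p = 0 := hp.2
    have hq0 : sv q = 0 := hq.2
    show sv (Step3.up :: (p ++ Step3.down :: q)) = 0
    simp [Step3.val, hp0, hq0]

lemma motzkin_up_decomp {r : List Step3} (h : IsMotzkin3 (Step3.up :: r)) :
    ∃ p q, r = p ++ Step3.down :: q ∧ IsMotzkin3 p ∧ IsMotzkin3 q := by
  rw [isMotzkin3_iff] at h
  obtain ⟨h1, h2⟩ := h
  have hpos : ∀ j, (0:ℤ) ≤ 1 + sv (r.take j) := by
    intro j
    have := h1 (j + 1)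
    simpa [Step3.val] using this
  have hsvr : sv r = -1 := by
    have : (1:ℤ) + sv r = 0 := by simpa [Step3.val] using h2
    omega
  have hex : ∃ k, sv (r.take k) = -1 := ⟨r.length, by simpa using hsvr⟩
  classical
  set k₀ := Nat.find hex with hk₀def
  have hk₀ : sv (r.take k₀) = -1 := Nat.find_spec hex
  have hmin : ∀ j < k₀, sv (r.take j) ≠ -1 := fun j hj => Nat.find_min hex hj
  have hge : ∀ j < k₀, (0:ℤ) ≤ sv (r.take j) := by
    intro j hj
    have := hpos j
    have := hmin j hj
    omega
  have hk₀len : k₀ ≤ r.length := Nat.find_min' hex (by simpa using hsvr)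
  have hk₀pos : 1 ≤ k₀ := by
    by_contra h'
    have : k₀ = 0 := by omega
    rw [this] at hk₀
    simp at hk₀
  set j₀ := k₀ - 1 with hj₀def
  have hj₀lt : j₀ < r.length := by omega
  have hsplit : r.take k₀ = r.take j₀ ++ [r[j₀]] := by
    have h1' : k₀ = j₀ + 1 := by omega
    rw [h1', List.take_add, List.take_one_drop_eq_of_lt_length hj₀lt]
    simp [List.get_eq_getElem]
  have hsv0 : sv (r.take j₀) = 0 ∧ (r[j₀]).val = -1 := by
    have h3 : sv (r.take j₀) + (r[j₀]).val = -1 := by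
      have h3' := hk₀
      rw [hsplit, sv_append] at h3'
      simp only [sv_cons, sv_nil, add_zero] at h3'
      exact h3'
    have h4 : (0:ℤ) ≤ sv (r.take j₀) := hge j₀ (by omega)
    rcases val_cases r[j₀] with h5 | h5 | h5 <;> omega
  have hdown : r[j₀] = Step3.down := eq_down_of_val _ hsv0.2
  refine ⟨r.take j₀, r.drop k₀, ?_, ?_, ?_⟩
  · have hk1 : k₀ = j₀ + 1 := by omega
    conv_lhs => rw [← List.take_append_drop j₀ r]
    rw [List.drop_eq_getElem_cons hj₀lt, hdown, hk1]
  · rw [isMotzkin3_iff]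
    refine ⟨fun i => ?_, hsv0.1⟩
    rw [List.take_take]
    exact hge _ (by omega)
  · rw [isMotzkin3_iff]
    have hdropsum : ∀ i, sv (r.take (k₀ + i)) = -1 + sv ((r.drop k₀).take i) := by
      intro i
      rw [List.take_add, sv_append, hk₀]
    constructor
    · intro i
      have := hpos (k₀ + i)
      have := hdropsum i
      omega
    · have : sv r = sv (r.take k₀) + sv (r.drop k₀) := by
        conv_lhs => rw [← List.take_append_drop k₀ r]
        rw [sv_append]
      omega

lemma decomp_len_not_lt {p q p' q' : List Step3}
    (h : p ++ Step3.down :: q = p' ++ Step3.down :: q')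
    (hp : IsMotzkin3 p) (hp' : IsMotzkin3 p') : ¬ p.length < p'.length := by
  intro hlt
  have hpre : p ++ [Step3.down] <+: p' ++ Step3.down :: q' := by
    rw [← h]
    exact ⟨q, by simp⟩
  have hpre' : p ++ [Step3.down] <+: p' := by
    refine List.prefix_of_prefix_length_le hpre ⟨Step3.down :: q', rfl⟩ ?_
    simp; omega
  have := hp'.1 _ hpre'
  have hp0 : sv p = 0 := hp.2
  have : (0:ℤ) ≤ sv (p ++ [Step3.down]) := this
  simp [hp0, Step3.val] at this

lemma decomp_unique {p q p' q' : List Step3}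
    (h : p ++ Step3.down :: q = p' ++ Step3.down :: q')
    (hp : IsMotzkin3 p) (hp' : IsMotzkin3 p') : p = p' ∧ q = q' := by
  have h1 := decomp_len_not_lt h hp hp'
  have h2 := decomp_len_not_lt h.symm hp' hp
  have hlen : p.length = p'.length := by omega
  obtain ⟨e1, e2⟩ := List.append_inj h hlen
  exact ⟨e1, by injection e2⟩


/-- paths starting with level c -/
def A (n : ℕ) (c : Fin 3) : Finset (List Step3) :=
  (MS n).image (fun t => Step3.level c :: t)

/-- paths starting with up, first return after p of length j -/
def B (n j : ℕ) : Finset (List Step3) :=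
  ((MS j) ×ˢ (MS (n - 1 - j))).image
    (fun pq => Step3.up :: (pq.1 ++ Step3.down :: pq.2))

lemma MS_succ_eq (n : ℕ) :
    MS (n + 1) = (Finset.univ : Finset (Fin 3)).biUnion (A n) ∪ (range n).biUnion (B n) := by
  ext l
  simp only [Finset.mem_union, Finset.mem_biUnion, Finset.mem_univ, true_and, A, B,
    Finset.mem_image, Finset.mem_product, Finset.mem_range, mem_MS]
  constructor
  · rintro ⟨hlen, hm⟩
    cases l with
    | nil => simp at hlen
    | cons x t =>
      cases x with
      | level c =>
        left
        exact ⟨c, t, ⟨by simpa using hlen, (motzkin_cons_level c t).mp hm⟩, rfl⟩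
      | down =>
        exfalso
        have := hm.1 [Step3.down] ⟨t, rfl⟩
        simp [Step3.val] at this
      | up =>
        right
        obtain ⟨p, q, rfl, hp, hq⟩ := motzkin_up_decomp hm
        have hlen' : p.length + 1 + q.length + 1 = n + 1 := by
          simpa [List.length_append, add_comm, add_assoc, add_left_comm] using hlen
        refine ⟨p.length, by omega, (p, q), ⟨⟨rfl, hp⟩, ⟨by show q.length = n - 1 - p.length; omega, hq⟩⟩, rfl⟩
  · rintro (⟨c, t, ⟨hlen, hm⟩, rfl⟩ | ⟨j, hj, ⟨p, q⟩, ⟨⟨hpl, hpm⟩, ⟨hql, hqm⟩⟩, rfl⟩)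
    · exact ⟨by simp [hlen], (motzkin_cons_level c t).mpr hm⟩
    · refine ⟨?_, motzkin_up_down hpm hqm⟩
      simp [List.length_append, hpl, hql]
      omega

lemma card_A (n : ℕ) (c : Fin 3) : (A n c).card = m n :=
  Finset.card_image_of_injective _ (fun a b h => by injection h)

lemma card_B (n j : ℕ) : (B n j).card = m j * m (n - 1 - j) := by
  have hinj : Set.InjOn (fun pq : List Step3 × List Step3 => Step3.up :: (pq.1 ++ Step3.down :: pq.2))
      ↑((MS j) ×ˢ (MS (n - 1 - j))) := by
    rintro ⟨p, q⟩ hpq ⟨p', q'⟩ hpq' h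
    simp only [Finset.mem_coe, Finset.mem_product, mem_MS] at hpq hpq'
    have h' : p ++ Step3.down :: q = p' ++ Step3.down :: q' := by injection h
    obtain ⟨e1, e2⟩ := decomp_unique h' hpq.1.2 hpq'.1.2
    simp [e1, e2]
  rw [B, Finset.card_image_of_injOn hinj, Finset.card_product]
  rfl

lemma disj_B (n : ℕ) : ∀ j ∈ range n, ∀ j' ∈ range n, j ≠ j' → Disjoint (B n j) (B n j') := by
  intro j _ j' _ hne
  rw [Finset.disjoint_left]
  rintro l hl hl'
  simp only [B, Finset.mem_image, Finset.mem_product, mem_MS] at hl hl'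
  obtain ⟨⟨p, q⟩, ⟨⟨hpl, hpm⟩, _⟩, rfl⟩ := hl
  obtain ⟨⟨p', q'⟩, ⟨⟨hpl', hpm'⟩, _⟩, h⟩ := hl'
  have h' : p' ++ Step3.down :: q' = p ++ Step3.down :: q := by injection h
  obtain ⟨e1, _⟩ := decomp_unique h' hpm' hpm
  exact hne (by rw [← hpl, ← hpl', e1])

lemma m_succ (n : ℕ) : m (n + 1) = 3 * m n + ∑ j ∈ range n, m j * m (n - 1 - j) := by
  rw [m, MS_succ_eq, Finset.card_union_of_disjoint, Finset.card_biUnion, Finset.card_biUnion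
    (disj_B n)]
  · simp only [card_A, card_B]
    simp [Finset.sum_const, Fintype.card_fin]
  · intro c _ c' _ hne
    rw [Function.onFun, Finset.disjoint_left]
    rintro l hl hl'
    simp only [A, Finset.mem_image] at hl hl'
    obtain ⟨t, _, rfl⟩ := hl
    obtain ⟨t', _, h⟩ := hl'
    have hcc : c = c' := by
      have h2 : Step3.level c' = Step3.level c := by injection h
      injection h2 with h3
      exact h3.symm
    exact hne hcc
  · rw [Finset.disjoint_left]
    rintro l hl hl'
    simp only [Finset.mem_biUnion, A, B, Finset.mem_image] at hl hl'
    obtain ⟨c, _, t, _, rfl⟩ := hl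
    obtain ⟨j, _, pq, _, h⟩ := hl'
    exact Step3.noConfusion (by injection h)

end M3
open Finset

namespace M3A

/-- the right-hand side, reindexed -/
def a (n : ℕ) : ℕ := ∑ j ∈ range (n + 1), catalan (j + 1) * Nat.choose n j

lemma add11 (k : ℕ) : k + 1 + 1 = k + 2 := by omega
lemma add21 (k : ℕ) : k + 2 + 1 = k + 3 := by omega
lemma add12 (k : ℕ) : k + 1 + 2 = k + 3 := by omega

lemma a_zero : a 0 = 1 := by simp [a, catalan_one]

lemma a_one : a 1 = 3 := by
  simp [a, Finset.sum_range_succ, catalan_one, catalan_two]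

/-- mini hockey stick -/
lemma hockey (M p : ℕ) : ∑ i ∈ range (M + 1), Nat.choose i p = Nat.choose (M + 1) (p + 1) := by
  induction M with
  | zero =>
    cases p with
    | zero => simp
    | succ p => simp [Nat.choose_eq_zero_of_lt (show (1:ℕ) < p + 1 + 1 by omega)]
  | succ M ih =>
    rw [Finset.sum_range_succ, ih, Nat.choose_succ_succ (M + 1) p]
    simp only [Nat.succ_eq_add_one]
    omega

/-- Vandermonde-type identity -/
lemma vand (p m : ℕ) : ∀ q, ∑ i ∈ range (m + 1), Nat.choose i p * Nat.choose (m - i) q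
    = Nat.choose (m + 1) (p + q + 1) := by
  induction m with
  | zero =>
    intro q
    cases p <;> cases q <;> simp [Nat.choose]
  | succ m ih =>
    intro q
    cases q with
    | zero =>
      simp only [Nat.choose_zero_right, mul_one, Nat.add_zero]
      exact hockey (m + 1) p
    | succ q' =>
      rw [Finset.sum_range_succ]
      have hlast : Nat.choose (m + 1) p * Nat.choose (m + 1 - (m + 1)) (q' + 1) = 0 := by
        simp
      rw [hlast, add_zero]
      have hcongr : ∀ i ∈ range (m + 1),
          Nat.choose i p * Nat.choose (m + 1 - i) (q' + 1)
            = Nat.choose i p * Nat.choose (m - i) q' + Nat.choose i p * Nat.choose (m - i) (q' + 1) := by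
        intro i hi
        rw [Finset.mem_range] at hi
        have h1 : m + 1 - i = (m - i) + 1 := by omega
        rw [h1, Nat.choose_succ_succ, mul_add]
      rw [Finset.sum_congr rfl hcongr, Finset.sum_add_distrib, ih q', ih (q' + 1)]
      have h5 := Nat.choose_succ_succ (m + 1) (p + q' + 1)
      simp only [Nat.succ_eq_add_one] at h5
      have h6 : p + q' + 1 + 1 = p + (q' + 1) + 1 := by omega
      rw [h6] at h5
      omega

lemma catalan_range_succ (n : ℕ) :
    catalan (n + 1) = ∑ i ∈ range (n + 1), catalan i * catalan (n - i) := by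
  rw [catalan_succ', Finset.Nat.sum_antidiagonal_eq_sum_range_succ_mk]

/-- Catalan convolution with endpoints removed -/
lemma catalan_conv (s : ℕ) :
    catalan (s + 3) = 2 * catalan (s + 2)
      + ∑ p ∈ range (s + 1), catalan (p + 1) * catalan (s - p + 1) := by
  have h := catalan_range_succ (s + 2)
  rw [Finset.sum_range_succ'] at h
  -- h : catalan (s+3) = (∑ i ∈ range (s+2), catalan (i+1) * catalan (s+2-(i+1))) + catalan 0 * catalan (s+2)
  rw [Finset.sum_range_succ] at h
  -- split off i = s+1 term
  have hterm : catalan (s + 1 + 1) * catalan (s + 2 - (s + 1 + 1)) = catalan (s + 2) := by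
    simp
  have hcongr : ∀ p ∈ range (s + 1),
      catalan (p + 1) * catalan (s + 2 - (p + 1)) = catalan (p + 1) * catalan (s - p + 1) := by
    intro p hp
    rw [Finset.mem_range] at hp
    congr 2
    omega
  rw [hterm, Finset.sum_congr rfl hcongr] at h
  simp only [catalan_zero, one_mul, Nat.sub_zero, add11, add21, add12] at h
  omega

lemma a_succ (n : ℕ) :
    a (n + 1) = (∑ j ∈ range (n + 1), catalan (j + 2) * Nat.choose n j) + a n := by
  have e1 : a n = 1 + ∑ j ∈ range n, catalan (j + 2) * Nat.choose n (j + 1) := by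
    rw [a, Finset.sum_range_succ']
    simp only [add11, Nat.choose_zero_right, catalan_one, mul_one, zero_add]
    omega
  rw [a, Finset.sum_range_succ']
  simp only [zero_add, Nat.choose_zero_right, catalan_one, mul_one]
  have hcongr : ∀ j ∈ range (n + 1),
      catalan (j + 1 + 1) * Nat.choose (n + 1) (j + 1)
        = catalan (j + 2) * Nat.choose n j + catalan (j + 2) * Nat.choose n (j + 1) := by
    intro j _
    rw [add11, Nat.choose_succ_succ, mul_add]
  rw [Finset.sum_congr rfl hcongr, Finset.sum_add_distrib]
  have e2 : ∑ j ∈ range (n + 1), catalan (j + 2) * Nat.choose n (j + 1)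
      = ∑ j ∈ range n, catalan (j + 2) * Nat.choose n (j + 1) := by
    rw [Finset.sum_range_succ]
    simp
  rw [e2]
  omega

lemma a_ext {j M : ℕ} (h : j < M) :
    a j = ∑ p ∈ range M, catalan (p + 1) * Nat.choose j p := by
  rw [a]
  apply Finset.sum_subset
  · intro x hx
    rw [Finset.mem_range] at hx ⊢
    omega
  · intro x _ hx
    rw [Finset.mem_range] at hx
    push_neg at hx
    rw [Nat.choose_eq_zero_of_lt (by omega), mul_zero]

lemma key (n : ℕ) (hn : 1 ≤ n) :
    ∑ j ∈ range n, a j * a (n - 1 - j)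
      = ∑ s ∈ range n, (∑ p ∈ range (s + 1), catalan (p + 1) * catalan (s - p + 1))
          * Nat.choose n (s + 1) := by
  -- Step 1: expand into triple sum and apply Vandermonde
  have step1 : ∑ j ∈ range n, a j * a (n - 1 - j)
      = ∑ p ∈ range n, ∑ q ∈ range n,
          catalan (p + 1) * catalan (q + 1) * Nat.choose n (p + q + 1) := by
    have e : ∀ j ∈ range n, a j * a (n - 1 - j)
        = ∑ p ∈ range n, ∑ q ∈ range n,
            (catalan (p + 1) * Nat.choose j p) * (catalan (q + 1) * Nat.choose (n - 1 - j) q) := by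
      intro j hj
      rw [Finset.mem_range] at hj
      rw [a_ext hj, a_ext (show n - 1 - j < n by omega), Finset.sum_mul_sum]
    rw [Finset.sum_congr rfl e]
    rw [Finset.sum_comm]
    congr 1
    ext p
    rw [Finset.sum_comm]
    congr 1
    ext q
    have : ∀ j ∈ range n, (catalan (p+1) * Nat.choose j p) * (catalan (q+1) * Nat.choose (n-1-j) q)
        = (catalan (p+1) * catalan (q+1)) * (Nat.choose j p * Nat.choose (n-1-j) q) := by
      intro j _; ring
    rw [Finset.sum_congr rfl this, ← Finset.mul_sum]
    have hv := vand p (n - 1) q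
    have hn1 : n - 1 + 1 = n := by omega
    rw [hn1] at hv
    rw [hv]
  rw [step1]
  -- Step 2: reindex double sum along diagonals
  set F : ℕ × ℕ → ℕ := fun pq => catalan (pq.1 + 1) * catalan (pq.2 + 1) * Nat.choose n (pq.1 + pq.2 + 1) with hF
  have e2 : ∑ p ∈ range n, ∑ q ∈ range n,
      catalan (p + 1) * catalan (q + 1) * Nat.choose n (p + q + 1)
      = ∑ pq ∈ (range n ×ˢ range n), F pq := by
    rw [Finset.sum_product]
  rw [e2]
  have hsub : (range n ×ˢ range n).filter (fun pq => pq.1 + pq.2 < n) ⊆ range n ×ˢ range n :=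
    Finset.filter_subset _ _
  have e3 : ∑ pq ∈ (range n ×ˢ range n), F pq
      = ∑ pq ∈ (range n ×ˢ range n).filter (fun pq => pq.1 + pq.2 < n), F pq := by
    symm
    apply Finset.sum_subset hsub
    intro pq hpq hpq'
    rw [Finset.mem_filter] at hpq'
    have : ¬ pq.1 + pq.2 < n := fun h => hpq' ⟨hpq, h⟩
    rw [hF]
    simp only
    rw [Nat.choose_eq_zero_of_lt (by omega), mul_zero]
  rw [e3]
  have hset : (range n ×ˢ range n).filter (fun pq => pq.1 + pq.2 < n)
      = (range n).biUnion (fun s => Finset.HasAntidiagonal.antidiagonal s) := by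
    ext ⟨p, q⟩
    simp only [Finset.mem_filter, Finset.mem_product, Finset.mem_range, Finset.mem_biUnion,
      Finset.HasAntidiagonal.mem_antidiagonal]
    constructor
    · rintro ⟨⟨_, _⟩, h⟩
      exact ⟨p + q, h, rfl⟩
    · rintro ⟨s, hs, h⟩
      refine ⟨⟨by omega, by omega⟩, by omega⟩
  rw [hset, Finset.sum_biUnion]
  · apply Finset.sum_congr rfl
    intro s hs
    rw [Finset.Nat.sum_antidiagonal_eq_sum_range_succ_mk, Finset.sum_mul]
    apply Finset.sum_congr rfl
    intro p hp
    rw [Finset.mem_range] at hp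
    rw [hF]
    simp only
    have h1 : p + (s - p) + 1 = s + 1 := by omega
    rw [h1]
  · intro s _ s' _ hne
    simp only [Function.onFun]
    rw [Finset.disjoint_left]
    rintro ⟨p, q⟩ h1 h2
    rw [Finset.HasAntidiagonal.mem_antidiagonal] at h1 h2
    exact hne (by omega)

lemma a_rec (n : ℕ) : a (n + 1) = 3 * a n + ∑ j ∈ range n, a j * a (n - 1 - j) := by
  rcases Nat.eq_zero_or_pos n with rfl | hn
  · simp [a_one, a_zero]
  rw [a_succ]
  have e1 : a n = 1 + ∑ s ∈ range n, catalan (s + 2) * Nat.choose n (s + 1) := by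
    rw [a, Finset.sum_range_succ']
    simp only [add11, Nat.choose_zero_right, catalan_one, mul_one, zero_add]
    omega
  have e2 : ∑ t ∈ range (n + 1), catalan (t + 2) * Nat.choose n t
      = 2 + ∑ s ∈ range n, catalan (s + 3) * Nat.choose n (s + 1) := by
    rw [Finset.sum_range_succ']
    simp only [add11, add21, add12, Nat.choose_zero_right, catalan_two, mul_one, zero_add]
    omega
  have e3 : ∑ s ∈ range n, catalan (s + 3) * Nat.choose n (s + 1)
      = 2 * (∑ s ∈ range n, catalan (s + 2) * Nat.choose n (s + 1))
        + ∑ s ∈ range n, (∑ p ∈ range (s + 1), catalan (p + 1) * catalan (s - p + 1))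
            * Nat.choose n (s + 1) := by
    have hc : ∀ s ∈ range n, catalan (s + 3) * Nat.choose n (s + 1)
        = 2 * (catalan (s + 2) * Nat.choose n (s + 1))
          + (∑ p ∈ range (s + 1), catalan (p + 1) * catalan (s - p + 1)) * Nat.choose n (s + 1) := by
      intro s _
      rw [catalan_conv s, add_mul]
      ring
    rw [Finset.sum_congr rfl hc, Finset.sum_add_distrib, ← Finset.mul_sum]
  rw [← key n hn] at e3
  omega

end M3A

lemma m_eq_a : ∀ n, M3.m n = M3A.a n := by
  intro n
  induction n using Nat.strong_induction_on with
  | _ n ih =>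
    match n with
    | 0 => rw [M3.m_zero, M3A.a_zero]
    | Nat.succ k =>
      rw [M3.m_succ, M3A.a_rec, ih k (by omega)]
      congr 1
      apply Finset.sum_congr rfl
      intro j hj
      rw [Finset.mem_range] at hj
      rw [ih j (by omega), ih (k - 1 - j) (by omega)]


/-- For `N ≥ 1`, the number of 3-coloured Motzkin paths of length `N - 1` equals
`∑_{k=1}^{N} C(k) · binom(N-1, k-1)`, which counts multi-edge trees of total
multiplicity `N`. -/
theorem card_motzkin3_eq_sum_catalan (N : ℕ) (hN : 1 ≤ N) :
    Nat.card {l : List Step3 // l.length = N - 1 ∧ IsMotzkin3 l} =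
      ∑ k ∈ Finset.Icc 1 N, catalan k * Nat.choose (N - 1) (k - 1) := by
  have e : {l : List Step3 // l.length = N - 1 ∧ IsMotzkin3 l} ≃ {l // l ∈ M3.MS (N - 1)} :=
    Equiv.subtypeEquivRight (fun l => M3.mem_MS.symm)
  rw [Nat.card_congr e, Nat.card_eq_finsetCard]
  have h1 : (M3.MS (N - 1)).card = M3A.a (N - 1) := m_eq_a (N - 1)
  rw [h1, M3A.a]
  have h2 : Finset.Icc 1 N
      = Finset.map ⟨fun j => j + 1, add_left_injective 1⟩ (Finset.range N) := by
    ext x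
    simp only [Finset.mem_map, Finset.mem_range, Finset.mem_Icc, Function.Embedding.coeFn_mk]
    constructor
    · rintro ⟨hx1, hx2⟩
      exact ⟨x - 1, by omega, by omega⟩
    · rintro ⟨j, hj, rfl⟩
      omega
  rw [h2, Finset.sum_map]
  have h3 : N - 1 + 1 = N := by omega
  rw [h3]
  apply Finset.sum_congr rfl
  intro j _
  simp only [Function.Embedding.coeFn_mk, Nat.add_sub_cancel]
end

section
/- For every N ≥ 1, there is a bijection between the set of multi-edge trees of total multiplicity N — encoded as pairs (w, f) where w is a Dyck word of some semilength k ≥ 1 (encoding a plane tree with k edges) and f : Fin k → ℕ₊ assigns positive integer multiplicities to the k edges in preorder with Σ f = N — and the set of 3-coloured Motzkin paths of length N−1. -/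
/-- A multi-edge tree of total multiplicity `N`, encoded as a pair `(w, f)` where
`w` is a Dyck word of some semilength `k ≥ 1` (encoding a plane tree with `k` edges)
and `f : Fin k → ℕ+` assigns positive multiplicities to the `k` edges in preorder,
summing to `N`. -/
def MultiEdgeTree (N : ℕ) : Type :=
  {t : Σ k : ℕ, List StepUD × (Fin k → ℕ+) //
    1 ≤ t.1 ∧ t.2.1.length = 2 * t.1 ∧ IsDyck t.2.1 ∧ ∑ i, (t.2.2 i : ℕ) = N}


namespace MET

variable {α : Type*}

/-- Sum of step values. -/
def S (val : α → ℤ) (l : List α) : ℤ := (l.map val).sum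

@[simp] lemma S_nil (val : α → ℤ) : S val ([] : List α) = 0 := rfl
@[simp] lemma S_cons (val : α → ℤ) (a : α) (l : List α) :
    S val (a :: l) = val a + S val l := by simp [S]
@[simp] lemma S_append (val : α → ℤ) (l₁ l₂ : List α) :
    S val (l₁ ++ l₂) = S val l₁ + S val l₂ := by simp [S]

def Nonneg (val : α → ℤ) (l : List α) : Prop := ∀ t, t <+: l → 0 ≤ S val t

def Bal (val : α → ℤ) (l : List α) : Prop := Nonneg val l ∧ S val l = 0

lemma prefix_cons_cases {t : List α} {a : α} {l : List α} (h : t <+: a :: l) :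
    t = [] ∨ ∃ t', t = a :: t' ∧ t' <+: l := by
  rcases t with _ | ⟨x, t⟩
  · exact Or.inl rfl
  · obtain ⟨r, hr⟩ := h
    injection hr with h1 h2
    exact Or.inr ⟨t, by rw [h1], ⟨r, h2⟩⟩

lemma prefix_append_cases {t l₁ l₂ : List α} (h : t <+: l₁ ++ l₂) :
    t <+: l₁ ∨ ∃ t₂, t₂ <+: l₂ ∧ t = l₁ ++ t₂ := by
  rcases List.prefix_or_prefix_of_prefix h (l₁.prefix_append l₂) with h1 | h1
  · exact Or.inl h1
  · obtain ⟨r, hr⟩ := h1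
    obtain ⟨s, hs⟩ := h
    refine Or.inr ⟨r, ⟨s, ?_⟩, hr.symm⟩
    have : l₁ ++ (r ++ s) = l₁ ++ l₂ := by rw [← List.append_assoc, hr, hs]
    exact List.append_cancel_left this

lemma bal_nil (val : α → ℤ) : Bal val ([] : List α) := by
  refine ⟨fun t ht => ?_, rfl⟩
  rw [List.prefix_nil.mp ht]; simp

lemma bal_cons0 {val : α → ℤ} {a : α} {l : List α} (ha : val a = 0) (h : Bal val l) :
    Bal val (a :: l) := by
  refine ⟨fun t ht => ?_, by simp [ha, h.2]⟩
  rcases prefix_cons_cases ht with rfl | ⟨t', rfl, ht'⟩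
  · simp
  · rw [S_cons, ha, zero_add]; exact h.1 t' ht'

lemma bal_of_cons0 {val : α → ℤ} {a : α} {l : List α} (ha : val a = 0) (h : Bal val (a :: l)) :
    Bal val l := by
  constructor
  · intro t ht
    have := h.1 (a :: t) (List.cons_prefix_cons.mpr ⟨rfl, ht⟩)
    rw [S_cons, ha, zero_add] at this; exact this
  · have := h.2
    rw [S_cons, ha, zero_add] at this; exact this

lemma bal_updown {val : α → ℤ} {u d : α} {A B : List α} (hu : val u = 1) (hd : val d = -1)
    (hA : Bal val A) (hB : Bal val B) : Bal val (u :: (A ++ d :: B)) := by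
  constructor
  · intro t ht
    rcases prefix_cons_cases ht with rfl | ⟨t', rfl, ht'⟩
    · simp
    · rw [S_cons, hu]
      rcases prefix_append_cases ht' with h1 | ⟨t₂, ht₂, rfl⟩
      · have := hA.1 t' h1; omega
      · rw [S_append, hA.2, zero_add]
        rcases prefix_cons_cases ht₂ with rfl | ⟨t₃, rfl, ht₃⟩
        · simp
        · have := hB.1 t₃ ht₃
          rw [S_cons, hd]; omega
  · rw [S_cons, S_append, S_cons, hu, hd, hA.2, hB.2]; ring

private lemma uniq_aux {val : α → ℤ} {A B A' B' : List α} {d d' : α}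
    (h : A ++ d :: B = A' ++ d' :: B') (hd : val d < 0) (hA : Bal val A)
    (hA' : Bal val A') (hp : A <+: A') : A = A' := by
  obtain ⟨c, rfl⟩ := hp
  rcases c with _ | ⟨x, c⟩
  · simp
  · exfalso
    rw [List.append_assoc] at h
    have h2 : d :: B = x :: (c ++ d' :: B') := List.append_cancel_left h
    injection h2 with hx _
    have hpre : (A ++ [d]) <+: A ++ x :: c := by
      rw [← hx]; exact ⟨c, by simp⟩
    have := hA'.1 (A ++ [d]) hpre
    rw [S_append] at this
    simp only [S_cons, S_nil] at this
    have hA0 := hA.2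
    omega

/-- Uniqueness of the first-return factorisation. -/
lemma uniq_split {val : α → ℤ} {A B A' B' : List α} {d d' : α}
    (h : A ++ d :: B = A' ++ d' :: B') (hd : val d < 0) (hd' : val d' < 0)
    (hA : Bal val A) (hA' : Bal val A') : A = A' := by
  have p1 : A <+: A ++ d :: B := ⟨d :: B, rfl⟩
  have p2 : A' <+: A ++ d :: B := by rw [h]; exact ⟨d' :: B', rfl⟩
  rcases List.prefix_or_prefix_of_prefix p1 p2 with hp | hp
  · exact uniq_aux h hd hA hA' hp
  · exact (uniq_aux h.symm hd' hA' hA hp).symm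

/-- Existence of the first-return factorisation. -/
lemma exists_split {val : α → ℤ} {l : List α}
    (hv : ∀ a ∈ l, val a = 1 ∨ val a = 0 ∨ val a = -1)
    (hpre : ∀ t, t <+: l → -1 ≤ S val t) (hsum : S val l = -1) :
    ∃ A d B, l = A ++ d :: B ∧ val d = -1 ∧ Bal val A ∧ Bal val B := by
  classical
  have hP : ∃ j, S val (l.take j) < 0 := ⟨l.length, by rw [List.take_length, hsum]; norm_num⟩
  have hj : S val (l.take (Nat.find hP)) < 0 := Nat.find_spec hP
  have hmin : ∀ i < Nat.find hP, 0 ≤ S val (l.take i) :=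
    fun i hi => not_lt.mp (Nat.find_min hP hi)
  have hj0 : Nat.find hP ≠ 0 := by
    intro h0; rw [h0] at hj; simp at hj
  have hjle : Nat.find hP ≤ l.length := Nat.find_le (by rw [List.take_length, hsum]; norm_num)
  obtain ⟨j', hj'⟩ : ∃ j', Nat.find hP = j' + 1 := ⟨Nat.find hP - 1, by omega⟩
  have hgetlt : j' < l.length := by omega
  set d := l.get ⟨j', hgetlt⟩ with hdd
  have htake : l.take (j' + 1) = l.take j' ++ [d] := by
    rw [List.take_succ]
    congr 1
    rw [List.getElem?_eq_getElem hgetlt]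
    rfl
  have hA0 : 0 ≤ S val (l.take j') := hmin j' (by omega)
  rw [hj'] at hj
  rw [htake, S_append] at hj
  simp only [S_cons, S_nil, add_zero] at hj
  have hprej : -1 ≤ S val (l.take j') + val d := by
    have := hpre (l.take (j' + 1)) (l.take_prefix _)
    rw [htake, S_append] at this
    simp only [S_cons, S_nil, add_zero] at this
    exact this
  have hdmem : d ∈ l := List.get_mem l ⟨j', hgetlt⟩
  have hdval : val d = -1 ∧ S val (l.take j') = 0 := by
    rcases hv d hdmem with h | h | h <;> omega
  refine ⟨l.take j', d, l.drop (j' + 1), ?_, hdval.1, ⟨?_, hdval.2⟩, ?_, ?_⟩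
  · conv_lhs => rw [← List.take_append_drop (j' + 1) l]
    rw [htake, List.append_assoc]; rfl
  · intro t ht
    have hlen : t.length ≤ j' := by
      have := ht.length_le
      simp only [List.length_take] at this; omega
    have heq : t = l.take t.length := by
      have h1 : t <+: l := ht.trans (l.take_prefix _)
      exact List.prefix_iff_eq_take.mp h1
    rw [heq]
    exact hmin t.length (by omega)
  · intro t ht
    obtain ⟨r, hr⟩ := ht
    have hpref : (l.take (j' + 1) ++ t) <+: l := by
      refine ⟨r, ?_⟩
      rw [List.append_assoc, hr, List.take_append_drop]
    have := hpre _ hpref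
    rw [S_append, htake, S_append] at this
    simp only [S_cons, S_nil, add_zero] at this
    omega
  · -- sum of B
    have hsl : S val l = S val (l.take (j' + 1)) + S val (l.drop (j' + 1)) := by
      conv_lhs => rw [← List.take_append_drop (j' + 1) l]
      rw [S_append]
    rw [hsum, htake, S_append] at hsl
    simp only [S_cons, S_nil, add_zero] at hsl
    omega

/-- Parity: for ±1-valued steps, balanced lists have even length. -/
lemma even_length_of_bal {val : α → ℤ} {l : List α}
    (hv : ∀ a ∈ l, val a = 1 ∨ val a = -1) (hsum : S val l = 0) :
    ∃ k, l.length = 2 * k := by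
  have key : ∀ l : List α, (∀ a ∈ l, val a = 1 ∨ val a = -1) →
      Even (S val l + l.length) := by
    intro l hl
    induction l with
    | nil => simp
    | cons a l ih =>
      have h1 : Even (S val l + l.length) := ih (fun x hx => hl x (List.mem_cons_of_mem a hx))
      have h2 : Even (val a + 1) := by
        rcases hl a List.mem_cons_self with h | h <;> rw [h] <;> decide
      have : S val (a :: l) + (a :: l).length = (val a + 1) + (S val l + l.length) := by
        simp; ring
      rw [this]
      exact h2.add h1
  have := key l hv
  rw [hsum, zero_add] at this
  obtain ⟨k, hk⟩ := this
  have hk' : (l.length : ℤ) = 2 * k := by omega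
  have hknn : 0 ≤ k := by omega
  exact ⟨k.toNat, by omega⟩

end MET

namespace MET

/-- Algebraic 3-coloured Motzkin paths. -/
inductive Mz : Type
  | nil : Mz
  | lvl (c : Fin 3) (z : Mz) : Mz
  | ud (i r : Mz) : Mz

/-- Length of the corresponding path. -/
def Mz.len : Mz → ℕ
  | .nil => 0
  | .lvl _ z => z.len + 1
  | .ud i r => i.len + r.len + 2

/-- The list of steps of an algebraic Motzkin path. -/
def Mz.toL : Mz → List Step3
  | .nil => []
  | .lvl c z => .level c :: z.toL
  | .ud i r => .up :: (i.toL ++ .down :: r.toL)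

@[simp] lemma length_toL (z : Mz) : z.toL.length = z.len := by
  induction z with
  | nil => rfl
  | lvl c z ih => simp [Mz.toL, Mz.len, ih]
  | ud i r ih1 ih2 => simp [Mz.toL, Mz.len, ih1, ih2]; omega

lemma bal_toL (z : Mz) : Bal Step3.val z.toL := by
  induction z with
  | nil => exact bal_nil _
  | lvl c z ih => exact bal_cons0 rfl ih
  | ud i r ih1 ih2 => exact bal_updown rfl rfl ih1 ih2

lemma toL_inj : ∀ z₁ z₂ : Mz, z₁.toL = z₂.toL → z₁ = z₂ := by
  intro z₁
  induction z₁ with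
  | nil => intro z₂ h; cases z₂ <;> simp [Mz.toL] at h ⊢
  | lvl c z ih =>
    intro z₂ h
    cases z₂ with
    | nil => simp [Mz.toL] at h
    | lvl c' z' =>
      simp only [Mz.toL, List.cons.injEq] at h
      obtain ⟨h1, h2⟩ := h
      injection h1 with hc
      rw [hc, ih z' h2]
    | ud i' r' => simp [Mz.toL] at h
  | ud i r ih1 ih2 =>
    intro z₂ h
    cases z₂ with
    | nil => simp [Mz.toL] at h
    | lvl c' z' => simp [Mz.toL] at h
    | ud i' r' =>
      simp only [Mz.toL, List.cons.injEq] at h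
      obtain ⟨-, h2⟩ := h
      have hii : i.toL = i'.toL :=
        uniq_split h2 (by norm_num [Step3.val]) (by norm_num [Step3.val])
          (bal_toL i) (bal_toL i')
      rw [hii] at h2
      have hrr : Step3.down :: r.toL = Step3.down :: r'.toL := List.append_cancel_left h2
      injection hrr with _ hrr
      rw [ih1 i' hii, ih2 r' hrr]

lemma toL_surj : ∀ n : ℕ, ∀ l : List Step3, l.length = n → Bal Step3.val l →
    ∃ z : Mz, z.toL = l := by
  intro n
  induction n using Nat.strong_induction_on with
  | _ n ih =>
    intro l hlen hbal
    cases l with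
    | nil => exact ⟨.nil, rfl⟩
    | cons a r =>
      cases a with
      | level c =>
        obtain ⟨z, hz⟩ := ih r.length (by simp [← hlen]) r rfl (bal_of_cons0 (show Step3.val (.level c) = 0 from rfl) hbal)
        exact ⟨.lvl c z, by simp [Mz.toL, hz]⟩
      | down =>
        have := hbal.1 [.down] ⟨r, rfl⟩
        simp [Step3.val] at this
      | up =>
        have hs : S Step3.val r = -1 := by
          have := hbal.2
          simp only [S_cons] at this
          simp only [Step3.val] at this
          omega
        have hpre : ∀ t, t <+: r → -1 ≤ S Step3.val t := by
          intro t ht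
          have := hbal.1 (.up :: t) (List.cons_prefix_cons.mpr ⟨rfl, ht⟩)
          simp only [S_cons, Step3.val] at this
          omega
        have hv : ∀ a ∈ r, Step3.val a = 1 ∨ Step3.val a = 0 ∨ Step3.val a = -1 := by
          intro a _; cases a <;> simp [Step3.val]
        obtain ⟨A, d, B, hsplit, hd, hA, hB⟩ := exists_split hv hpre hs
        have hdd : d = .down := by
          cases d with
          | up => simp [Step3.val] at hd
          | down => rfl
          | level c => simp [Step3.val] at hd
        subst hdd
        have hlenr : r.length + 1 = n := by
          simpa using hlen
        have hlA : A.length < n := by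
          have := congrArg List.length hsplit
          simp at this; omega
        have hlB : B.length < n := by
          have := congrArg List.length hsplit
          simp at this; omega
        obtain ⟨zA, hzA⟩ := ih A.length hlA A rfl hA
        obtain ⟨zB, hzB⟩ := ih B.length hlB B rfl hB
        exact ⟨.ud zA zB, by simp [Mz.toL, hzA, hzB, ← hsplit]⟩

end MET

namespace MET

/-- Algebraic multi-edge trees (in first-child decomposition form):
`node m a b` is a tree whose root's first edge has multiplicity `m + 1`,
with subtree `a` below it and remaining tree `b`. -/
inductive Tr : Type
  | nil : Tr
  | node (m : ℕ) (a b : Tr) : Tr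

/-- Total multiplicity. -/
def Tr.wt : Tr → ℕ
  | .nil => 0
  | .node m a b => m + 1 + a.wt + b.wt

/-- The Dyck word of the underlying plane tree. -/
def Tr.dw : Tr → List StepUD
  | .nil => []
  | .node _ a b => .up :: (a.dw ++ .down :: b.dw)

/-- The multiplicities in preorder. -/
def Tr.ml : Tr → List ℕ+
  | .nil => []
  | .node m a b => Nat.succPNat m :: (a.ml ++ b.ml)

lemma bal_dw (t : Tr) : Bal StepUD.val t.dw := by
  induction t with
  | nil => exact bal_nil _
  | node m a b ih1 ih2 => exact bal_updown rfl rfl ih1 ih2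

@[simp] lemma length_dw (t : Tr) : t.dw.length = 2 * t.ml.length := by
  induction t with
  | nil => rfl
  | node m a b ih1 ih2 => simp [Tr.dw, Tr.ml, ih1, ih2]; omega

@[simp] lemma sum_ml (t : Tr) : (t.ml.map (fun x : ℕ+ => (x : ℕ))).sum = t.wt := by
  induction t with
  | nil => rfl
  | node m a b ih1 ih2 => simp [Tr.ml, Tr.wt, ih1, ih2]; omega

lemma dw_ml_inj : ∀ t₁ t₂ : Tr, t₁.dw = t₂.dw → t₁.ml = t₂.ml → t₁ = t₂ := by
  intro t₁
  induction t₁ with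
  | nil =>
    intro t₂ h _; cases t₂ <;> simp [Tr.dw] at h ⊢
  | node m a b ih1 ih2 =>
    intro t₂ h hm
    cases t₂ with
    | nil => simp [Tr.dw] at h
    | node m' a' b' =>
      simp only [Tr.dw, List.cons.injEq] at h
      obtain ⟨-, h2⟩ := h
      have haa : a.dw = a'.dw :=
        uniq_split h2 (by norm_num [StepUD.val]) (by norm_num [StepUD.val])
          (bal_dw a) (bal_dw a')
      rw [haa] at h2
      have hbb : StepUD.down :: b.dw = StepUD.down :: b'.dw := List.append_cancel_left h2
      injection hbb with _ hbb
      simp only [Tr.ml, List.cons.injEq] at hm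
      obtain ⟨hm0, hm1⟩ := hm
      have hlen : a.ml.length = a'.ml.length := by
        have := congrArg List.length haa
        simp only [length_dw] at this
        omega
      obtain ⟨hma, hmb⟩ := List.append_inj hm1 hlen
      have : m = m' := by
        have := congrArg (fun x : ℕ+ => (x : ℕ)) hm0
        simpa using this
      rw [this, ih1 a' haa hma, ih2 b' hbb hmb]

lemma dw_ml_surj : ∀ n : ℕ, ∀ (w : List StepUD) (L : List ℕ+), w.length = n →
    Bal StepUD.val w → w.length = 2 * L.length →
    ∃ t : Tr, t.dw = w ∧ t.ml = L := by
  intro n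
  induction n using Nat.strong_induction_on with
  | _ n ih =>
    intro w L hlen hbal hhalf
    cases w with
    | nil =>
      have : L = [] := by
        simpa using hhalf.symm
      exact ⟨.nil, rfl, by rw [this]; rfl⟩
    | cons s r =>
      cases s with
      | down =>
        have := hbal.1 [.down] ⟨r, rfl⟩
        simp [StepUD.val] at this
      | up =>
        have hs : S StepUD.val r = -1 := by
          have := hbal.2
          simp only [S_cons, StepUD.val] at this
          omega
        have hpre : ∀ t, t <+: r → -1 ≤ S StepUD.val t := by
          intro t ht
          have := hbal.1 (.up :: t) (List.cons_prefix_cons.mpr ⟨rfl, ht⟩)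
          simp only [S_cons, StepUD.val] at this
          omega
        have hv : ∀ a ∈ r, StepUD.val a = 1 ∨ StepUD.val a = 0 ∨ StepUD.val a = -1 := by
          intro a _; cases a <;> simp [StepUD.val]
        obtain ⟨A, d, B, hsplit, hd, hA, hB⟩ := exists_split hv hpre hs
        have hdd : d = .down := by
          cases d with
          | up => simp [StepUD.val] at hd
          | down => rfl
        subst hdd
        obtain ⟨kA, hkA⟩ := even_length_of_bal
          (fun a _ => by cases a <;> simp [StepUD.val]) hA.2
        obtain ⟨kB, hkB⟩ := even_length_of_bal
          (fun a _ => by cases a <;> simp [StepUD.val]) hB.2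
        have hlenr : r.length + 1 = n := by simpa using hlen
        have hrlen : r.length = A.length + 1 + B.length := by
          have := congrArg List.length hsplit
          simp at this; omega
        -- split the multiplicity list
        have hLlen : L.length = 1 + kA + kB := by omega
        obtain ⟨m, rest, rfl⟩ : ∃ m rest, L = m :: rest := by
          cases L with
          | nil => simp at hLlen; omega
          | cons m rest => exact ⟨m, rest, rfl⟩
        have hrest : rest.length = kA + kB := by simp at hLlen; omega
        have htk : (rest.take kA).length = kA := by
          rw [List.length_take]; omega
        have hdk : (rest.drop kA).length = kB := by
          rw [List.length_drop]; omega
        obtain ⟨tA, htA, htA2⟩ := ih A.length (by omega) A (rest.take kA) rfl hA (by omega)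
        obtain ⟨tB, htB, htB2⟩ := ih B.length (by omega) B (rest.drop kA) rfl hB (by omega)
        refine ⟨.node m.natPred tA tB, ?_, ?_⟩
        · simp only [Tr.dw, htA, htB]
          rw [← hsplit]
        · simp only [Tr.ml, htA2, htB2, List.take_append_drop]
          congr 1
          exact PNat.succPNat_natPred m

end MET

namespace MET

/-- The bijection from multi-edge trees to Motzkin paths
(on trees with at least one edge, given by first-edge components). -/
def psi : ℕ → Tr → Tr → Mz
  | m + 1, a, b => .lvl 0 (psi m a b)
  | 0, .nil, .nil => .nil
  | 0, .nil, .node m a b => .lvl 1 (psi m a b)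
  | 0, .node m a b, .nil => .lvl 2 (psi m a b)
  | 0, .node m a b, .node m' a' b' => .ud (psi m a b) (psi m' a' b')
  termination_by m a b => m + a.wt + b.wt
  decreasing_by all_goals (simp [Tr.wt]; try omega)

/-- Its inverse. -/
def chi : Mz → ℕ × Tr × Tr
  | .nil => (0, .nil, .nil)
  | .lvl c z =>
    if c = 0 then ((chi z).1 + 1, (chi z).2.1, (chi z).2.2)
    else if c = 1 then (0, .nil, .node (chi z).1 (chi z).2.1 (chi z).2.2)
    else (0, .node (chi z).1 (chi z).2.1 (chi z).2.2, .nil)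
  | .ud i r => (0, .node (chi i).1 (chi i).2.1 (chi i).2.2,
      .node (chi r).1 (chi r).2.1 (chi r).2.2)

lemma len_psi : ∀ (m : ℕ) (a b : Tr), (psi m a b).len = m + a.wt + b.wt := by
  intro m a b
  induction m, a, b using psi.induct with
  | case1 m a b ih => simp [psi, Mz.len, ih]; omega
  | case2 => simp [psi, Mz.len, Tr.wt]
  | case3 m a b ih => simp [psi, Mz.len, Tr.wt, ih]; omega
  | case4 m a b ih => simp [psi, Mz.len, Tr.wt, ih]; omega
  | case5 m a b m' a' b' ih1 ih2 => simp [psi, Mz.len, Tr.wt, ih1, ih2]; omega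

lemma chi_psi : ∀ (m : ℕ) (a b : Tr), chi (psi m a b) = (m, a, b) := by
  intro m a b
  induction m, a, b using psi.induct with
  | case1 m a b ih => simp [psi, chi, ih]
  | case2 => simp [psi, chi]
  | case3 m a b ih => simp [psi, chi, ih]
  | case4 m a b ih => simp [psi, chi, ih]
  | case5 m a b m' a' b' ih1 ih2 => simp [psi, chi, ih1, ih2]

lemma psi_chi : ∀ z : Mz, psi (chi z).1 (chi z).2.1 (chi z).2.2 = z := by
  intro z
  induction z with
  | nil => simp [psi, chi]
  | lvl c z ih =>
    fin_cases c
    · simp [chi, psi, ih]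
    · simp [chi, psi, ih]
    · simp [chi, psi, ih]
  | ud i r ih1 ih2 => simp [chi, psi, ih1, ih2]

lemma wt_chi : ∀ z : Mz, (chi z).1 + (chi z).2.1.wt + (chi z).2.2.wt = z.len := by
  intro z
  induction z with
  | nil => simp [chi, Mz.len, Tr.wt]
  | lvl c z ih =>
    fin_cases c
    · simp [chi, Mz.len, Tr.wt] at ih ⊢; omega
    · simp [chi, Mz.len, Tr.wt] at ih ⊢; omega
    · simp [chi, Mz.len, Tr.wt] at ih ⊢; omega
  | ud i r ih1 ih2 => simp [chi, Mz.len, Tr.wt] at ih1 ih2 ⊢; omega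

/-- `psi` on whole trees. -/
def psiT : Tr → Mz
  | .nil => .nil
  | .node m a b => psi m a b

end MET

namespace MET

variable {N : ℕ}

/-- Encoding map from algebraic trees into the `MultiEdgeTree` data. -/
def F (hN : 1 ≤ N) (x : {t : Tr // t.wt = N}) : MultiEdgeTree N :=
  ⟨⟨x.1.ml.length, (x.1.dw, fun i => x.1.ml.get i)⟩, by
    refine ⟨?_, by simp, bal_dw x.1, ?_⟩
    · rcases Nat.eq_zero_or_pos x.1.ml.length with h0 | h1
      · exfalso
        have hnil : x.1.ml = [] := List.length_eq_zero_iff.mp h0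
        have := sum_ml x.1
        rw [hnil] at this
        simp at this
        omega
      · exact h1
    · calc ∑ i, ((x.1.ml.get i : ℕ))
          = (List.ofFn (fun i => ((x.1.ml.get i : ℕ)))).sum := List.sum_ofFn.symm
        _ = ((List.ofFn x.1.ml.get).map (fun y : ℕ+ => (y : ℕ))).sum := by
            rw [List.map_ofFn]; rfl
        _ = (x.1.ml.map (fun y : ℕ+ => (y : ℕ))).sum := by rw [List.ofFn_get]
        _ = x.1.wt := sum_ml _
        _ = N := x.2⟩

lemma F_bij (hN : 1 ≤ N) : Function.Bijective (F (N := N) hN) := by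
  constructor
  · rintro ⟨t₁, h₁⟩ ⟨t₂, h₂⟩ h
    have hv := congrArg (fun y : MultiEdgeTree N => (y.1.2.1, List.ofFn y.1.2.2)) h
    simp only [F, List.ofFn_get] at hv
    injection hv with hv1 hv2
    exact Subtype.ext (dw_ml_inj t₁ t₂ hv1 hv2)
  · rintro ⟨⟨k, w, f⟩, hk, hlen, hdyck, hsum⟩
    obtain ⟨t, hdw, hml⟩ := dw_ml_surj w.length w (List.ofFn f) rfl hdyck (by simp [hlen])
    have hwt : t.wt = N := by
      rw [← sum_ml t, hml, List.map_ofFn]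
      rw [List.sum_ofFn]
      exact hsum
    refine ⟨⟨t, hwt⟩, ?_⟩
    have hkk : t.ml.length = k := by rw [hml, List.length_ofFn]
    subst hkk
    apply Subtype.ext
    simp only [F]
    have hfun : (fun i => t.ml.get i) = f :=
      List.ofFn_inj.mp (by rw [List.ofFn_get]; exact hml)
    rw [hdw, hfun]

/-- Encoding map from algebraic Motzkin paths to step lists. -/
def G (x : {z : Mz // z.len = N - 1}) :
    {l : List Step3 // l.length = N - 1 ∧ IsMotzkin3 l} :=
  ⟨x.1.toL, by simp [x.2], bal_toL x.1⟩

lemma G_bij : Function.Bijective (G (N := N)) := by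
  constructor
  · rintro ⟨z₁, h₁⟩ ⟨z₂, h₂⟩ h
    have := congrArg Subtype.val h
    exact Subtype.ext (toL_inj z₁ z₂ this)
  · rintro ⟨l, hlen, hmz⟩
    obtain ⟨z, hz⟩ := toL_surj l.length l rfl hmz
    refine ⟨⟨z, ?_⟩, Subtype.ext hz⟩
    rw [← length_toL, hz, hlen]

/-- The structural bijection. -/
def H (hN : 1 ≤ N) (x : {t : Tr // t.wt = N}) : {z : Mz // z.len = N - 1} :=
  ⟨psiT x.1, by
    rcases x with ⟨t, ht⟩
    cases t with
    | nil => simp [Tr.wt] at ht; omega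
    | node m a b =>
      simp only [psiT, len_psi]
      simp only [Tr.wt] at ht
      omega⟩

lemma H_bij (hN : 1 ≤ N) : Function.Bijective (H (N := N) hN) := by
  constructor
  · rintro ⟨t₁, h₁⟩ ⟨t₂, h₂⟩ h
    have hne₁ : t₁ ≠ .nil := by
      rintro rfl; simp [Tr.wt] at h₁; omega
    have hne₂ : t₂ ≠ .nil := by
      rintro rfl; simp [Tr.wt] at h₂; omega
    apply Subtype.ext
    cases t₁ with
    | nil => exact absurd rfl hne₁
    | node m a b =>
      cases t₂ with
      | nil => exact absurd rfl hne₂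
      | node m' a' b' =>
        have hps : psi m a b = psi m' a' b' := by
          have := congrArg Subtype.val h
          simpa [H, psiT] using this
        have := congrArg chi hps
        rw [chi_psi, chi_psi] at this
        have e1 := congrArg Prod.fst this
        have e2 := congrArg (fun p : ℕ × Tr × Tr => p.2.1) this
        have e3 := congrArg (fun p : ℕ × Tr × Tr => p.2.2) this
        simp only at e1 e2 e3
        show Tr.node m a b = Tr.node m' a' b'
        rw [e1, e2, e3]
  · rintro ⟨z, hz⟩
    refine ⟨⟨.node (chi z).1 (chi z).2.1 (chi z).2.2, ?_⟩, ?_⟩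
    · have := wt_chi z
      simp only [Tr.wt]
      omega
    · apply Subtype.ext
      simp only [H, psiT]
      exact psi_chi z

end MET


/-- For every `N ≥ 1` there is a bijection between multi-edge trees of total
multiplicity `N` and 3-coloured Motzkin paths of length `N - 1`. -/
theorem multiEdgeTree_equiv_motzkin3 (N : ℕ) (hN : 1 ≤ N) :
    Nonempty (MultiEdgeTree N ≃
      {l : List Step3 // l.length = N - 1 ∧ IsMotzkin3 l}) := by
  exact ⟨((Equiv.ofBijective _ (MET.F_bij hN)).symm.trans
      (Equiv.ofBijective _ (MET.H_bij hN))).trans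
    (Equiv.ofBijective _ MET.G_bij)⟩
end

section
/- Let F be the unique formal power series over ℚ with (1 - X)·F = (1 - X) + X·F², and let M be the unique formal power series over ℚ with M = 1 + 3·X·M + X²·M². Then for every n ≥ 1, the coefficient of Xⁿ in F equals the coefficient of X^{n-1} in M; i.e., multi-edge trees with total multiplicity n are equinumerous with 3-coloured Motzkin paths of length n−1. -/
open PowerSeries

/-- The coefficient of `Xⁿ` (for `n ≥ 1`) in the generating function `F` of
multi-edge trees equals the coefficient of `X^{n-1}` in the generating function `M`
of 3-coloured Motzkin paths. -/
theorem multi_edge_tree_coeff_eq_motzkin3_coeff (F M : PowerSeries ℚ)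
    (hF : (1 - X) * F = (1 - X) + X * F ^ 2)
    (hM : M = 1 + 3 * X * M + X ^ 2 * M ^ 2) :
    ∀ n : ℕ, 1 ≤ n → coeff n F = coeff (n - 1) M := by
  set G : PowerSeries ℚ := 1 + X * M with hG
  have hGeq : (1 - X) * G = (1 - X) + X * G ^ 2 := by
    rw [hG]; linear_combination (X : PowerSeries ℚ) * hM
  have hfac : (1 - X - X * (F + G)) * (F - G) = 0 := by
    linear_combination hF - hGeq
  have hunit : (1 - X - X * (F + G) : PowerSeries ℚ) ≠ 0 := by
    intro h
    have := congrArg (constantCoeff (R := ℚ)) h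
    simp at this
  have hFG : F = G := by
    rcases mul_eq_zero.mp hfac with h | h
    · exact absurd h hunit
    · exact sub_eq_zero.mp h
  intro n hn
  obtain ⟨m, rfl⟩ := Nat.exists_eq_add_of_le hn
  rw [hFG, hG]
  simp [map_add, PowerSeries.coeff_one, Nat.add_comm 1 m, PowerSeries.coeff_succ_X_mul]
end
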